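/- arXiv:2202.11978 — 6 statements merged into one kernel-verified Lean document; each statement's English description precedes it below -/
import Mathlib

section
/- For the model-averaging risk R_n(w) = μᵀ(P(w) − I)²μ + tr(P(w)²Ω) with P(w) = Σ_{m=1}^{M} w_m P_m over nested projections, writing γ_m = Σ_{j=m}^{M} w_j, one has the decomposition R_n(w) = Σ_{m=1}^{M} [γ_m²(b_m + v_m) − 2γ_m b_m + b_m] + μᵀ(I − P_M)μ, where b_m = μᵀ(P_m − P_{m−1})μ and v_m = tr{(P_m − P_{m−1})Ω}. -/
open Matrix

/-- Decomposition of the model-averaging risk over nested projections: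
`R(w) = Σ_m [γ_m²(b_m+v_m) − 2γ_m b_m + b_m] + μᵀ(I−P_M)μ`. -/
theorem ma_risk_decomposition (n M : ℕ) (hM : 1 ≤ M)
    (P : ℕ → Matrix (Fin n) (Fin n) ℝ)
    (Ωm : Matrix (Fin n) (Fin n) ℝ) (μ : Fin n → ℝ) (w : ℕ → ℝ)
    (hP0 : P 0 = 0)
    (hmin : ∀ i j, i ≤ M → j ≤ M → P i * P j = P (min i j))
    (hsymm : ∀ i, i ≤ M → (P i)ᵀ = P i) :
    μ ⬝ᵥ ((((∑ m ∈ Finset.Icc 1 M, w m • P m) - 1) *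
          ((∑ m ∈ Finset.Icc 1 M, w m • P m) - 1)) *ᵥ μ)
      + ((∑ m ∈ Finset.Icc 1 M, w m • P m) *
          (∑ m ∈ Finset.Icc 1 M, w m • P m) * Ωm).trace
    = (∑ m ∈ Finset.Icc 1 M,
        ((∑ j ∈ Finset.Icc m M, w j) ^ 2 *
            (μ ⬝ᵥ ((P m - P (m - 1)) *ᵥ μ) + ((P m - P (m - 1)) * Ωm).trace)
          - 2 * (∑ j ∈ Finset.Icc m M, w j) * (μ ⬝ᵥ ((P m - P (m - 1)) *ᵥ μ))
          + μ ⬝ᵥ ((P m - P (m - 1)) *ᵥ μ)))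
      + μ ⬝ᵥ ((1 - P M) *ᵥ μ) := by
  classical
  set γ : ℕ → ℝ := fun m => ∑ j ∈ Finset.Icc m M, w j with hγ
  set Δ : ℕ → Matrix (Fin n) (Fin n) ℝ := fun m => P m - P (m - 1) with hΔ
  set S : Matrix (Fin n) (Fin n) ℝ := ∑ m ∈ Finset.Icc 1 M, w m • P m with hS
  -- helper: dot/mulVec of a finite sum of matrices
  have dsum : ∀ (s : Finset ℕ) (f : ℕ → Matrix (Fin n) (Fin n) ℝ),
      μ ⬝ᵥ ((∑ m ∈ s, f m) *ᵥ μ) = ∑ m ∈ s, μ ⬝ᵥ (f m *ᵥ μ) := by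
    intro s f
    induction s using Finset.induction with
    | empty => simp [Matrix.zero_mulVec]
    | insert _ _ h ih =>
      rw [Finset.sum_insert h, Finset.sum_insert h, Matrix.add_mulVec,
        dotProduct_add, ih]
  -- telescoping
  have tel : ∀ j : ℕ, ∑ m ∈ Finset.Icc 1 j, Δ m = P j := by
    intro j
    induction j with
    | zero => simp [hP0]
    | succ k ih =>
      rw [Finset.sum_Icc_succ_top (by omega : 1 ≤ k + 1), ih]
      simp [hΔ]
  -- Abel summation
  have habel : S = ∑ m ∈ Finset.Icc 1 M, γ m • Δ m := by
    have step1 : ∀ m ∈ Finset.Icc 1 M,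
        γ m • Δ m = ∑ j ∈ Finset.Icc 1 M, if m ≤ j then w j • Δ m else 0 := by
      intro m hm
      simp only [Finset.mem_Icc] at hm
      rw [hγ]
      rw [Finset.sum_smul]
      rw [← Finset.sum_filter]
      apply Finset.sum_congr _ (fun _ _ => rfl)
      ext j
      simp only [Finset.mem_Icc, Finset.mem_filter]
      omega
    rw [Finset.sum_congr rfl step1, Finset.sum_comm]
    apply Finset.sum_congr rfl
    intro j hj
    simp only [Finset.mem_Icc] at hj
    rw [← Finset.sum_filter]
    have hset : (Finset.Icc 1 M).filter (fun m => m ≤ j) = Finset.Icc 1 j := by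
      ext m
      simp only [Finset.mem_Icc, Finset.mem_filter]
      omega
    rw [hset, ← Finset.smul_sum, tel j]
  -- orthogonality of increments
  have orth : ∀ m ∈ Finset.Icc 1 M, ∀ k ∈ Finset.Icc 1 M,
      Δ m * Δ k = if m = k then Δ m else 0 := by
    intro m hm k hk
    simp only [Finset.mem_Icc] at hm hk
    have e1 := hmin m k (by omega) (by omega)
    have e2 := hmin m (k - 1) (by omega) (by omega)
    have e3 := hmin (m - 1) k (by omega) (by omega)
    have e4 := hmin (m - 1) (k - 1) (by omega) (by omega)
    simp only [hΔ, sub_mul, mul_sub, e1, e2, e3, e4]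
    rcases lt_trichotomy m k with h | h | h
    · rw [if_neg (by omega),
        show min m k = m by omega, show min m (k - 1) = m by omega,
        show min (m - 1) k = m - 1 by omega,
        show min (m - 1) (k - 1) = m - 1 by omega]
      abel
    · rw [if_pos h,
        show min m k = m by omega, show min m (k - 1) = m - 1 by omega,
        show min (m - 1) k = m - 1 by omega,
        show min (m - 1) (k - 1) = m - 1 by omega, h]
      abel
    · rw [if_neg (by omega),
        show min m k = k by omega, show min m (k - 1) = k - 1 by omega,
        show min (m - 1) k = k by omega,
        show min (m - 1) (k - 1) = k - 1 by omega]
      abel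
  -- S squared
  have hSS : S * S = ∑ m ∈ Finset.Icc 1 M, (γ m ^ 2) • Δ m := by
    rw [habel, Finset.sum_mul_sum]
    apply Finset.sum_congr rfl
    intro m hm
    rw [Finset.sum_eq_single m]
    · rw [Matrix.smul_mul, mul_smul_comm, orth m hm m hm, if_pos rfl,
        smul_smul, sq]
    · intro k hk hne
      rw [Matrix.smul_mul, mul_smul_comm, orth m hm k hk, if_neg (Ne.symm hne),
        smul_zero, smul_zero]
    · intro h; exact absurd hm h
  -- scalar abbreviations
  have hA : μ ⬝ᵥ ((S * S) *ᵥ μ) = ∑ m ∈ Finset.Icc 1 M, γ m ^ 2 * (μ ⬝ᵥ (Δ m *ᵥ μ)) := by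
    rw [hSS, dsum]
    exact Finset.sum_congr rfl fun m _ => by
      rw [Matrix.smul_mulVec, dotProduct_smul, smul_eq_mul]
  have hB : μ ⬝ᵥ (S *ᵥ μ) = ∑ m ∈ Finset.Icc 1 M, γ m * (μ ⬝ᵥ (Δ m *ᵥ μ)) := by
    rw [habel, dsum]
    exact Finset.sum_congr rfl fun m _ => by
      rw [Matrix.smul_mulVec, dotProduct_smul, smul_eq_mul]
  have hC : μ ⬝ᵥ μ = (∑ m ∈ Finset.Icc 1 M, μ ⬝ᵥ (Δ m *ᵥ μ)) + μ ⬝ᵥ ((1 - P M) *ᵥ μ) := by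
    rw [← dsum, tel M]
    rw [← dotProduct_add, ← Matrix.add_mulVec]
    congr 1
    · abel_nf
      simp
  have hT : (S * S * Ωm).trace = ∑ m ∈ Finset.Icc 1 M, γ m ^ 2 • (Δ m * Ωm).trace := by
    rw [hSS, Finset.sum_mul, Matrix.trace_sum]
    exact Finset.sum_congr rfl fun m _ => by
      rw [Matrix.smul_mul, Matrix.trace_smul]
  -- expand LHS quadratic form
  have expand : (S - 1) * (S - 1) = S * S - S - S + 1 := by
    noncomm_ring
  rw [expand]
  rw [show S * S - S - S + 1 = (S * S - S - S) + 1 from rfl]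
  rw [Matrix.add_mulVec, Matrix.sub_mulVec, Matrix.sub_mulVec, Matrix.one_mulVec,
    dotProduct_add, dotProduct_sub, dotProduct_sub]
  rw [hA, hB, hT, hC]
  simp only [smul_eq_mul]
  rw [Finset.sum_congr rfl (fun m _ => by
    ring_nf : ∀ m ∈ Finset.Icc 1 M,
      (γ m ^ 2 * (μ ⬝ᵥ (Δ m *ᵥ μ) + (Δ m * Ωm).trace)
        - 2 * γ m * (μ ⬝ᵥ (Δ m *ᵥ μ)) + μ ⬝ᵥ (Δ m *ᵥ μ))
      = γ m ^ 2 * (μ ⬝ᵥ (Δ m *ᵥ μ)) + γ m ^ 2 * (Δ m * Ωm).trace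
        - 2 * (γ m * (μ ⬝ᵥ (Δ m *ᵥ μ))) + μ ⬝ᵥ (Δ m *ᵥ μ))]
  simp only [Finset.sum_add_distrib, Finset.sum_sub_distrib]
  rw [← Finset.mul_sum]
  ring
end

section
/- The optimal model-averaging risk over the unit simplex equals R_n(w*) = tr(P_1 Ω) + Σ_{m=2}^{M} v_m b_m/(b_m + v_m) + μᵀ(I − P_M)μ, provided the sequence γ*_m = b_m/(b_m + v_m) is non-increasing in m (so that the minimizing γ's correspond to a valid weight vector in the simplex with γ_1 = 1). -/
open Matrix

-- telescoping sums
lemma tele1 {α : Type*} [AddCommGroup α] (f : ℕ → α) (k : ℕ) :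
    ∑ m ∈ Finset.Icc 1 k, (f m - f (m-1)) = f k - f 0 := by
  induction k with
  | zero => simp
  | succ k ih =>
      rw [Finset.sum_Icc_succ_top (by omega : 1 ≤ k+1), ih]
      simp

lemma tele2 {α : Type*} [AddCommGroup α] (h : ℕ → α) (a b : ℕ) (hab : a ≤ b + 1) :
    ∑ j ∈ Finset.Icc a b, (h j - h (j+1)) = h a - h (b+1) := by
  induction b with
  | zero =>
      interval_cases a
      · simp
      · simp
  | succ b ih =>
      rcases Nat.lt_or_ge a (b+2) with hlt | hge
      · rw [Finset.sum_Icc_succ_top (by omega : a ≤ b+1), ih (by omega)]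
        abel
      · have : a = b + 2 := by omega
        subst this
        simp [Finset.Icc_eq_empty_of_lt (by omega : b + 1 < b + 2)]

-- Abel summation
lemma abel_sum {α : Type*} [AddCommGroup α] [Module ℝ α] (M : ℕ) (w : ℕ → ℝ) (f : ℕ → α)
    (hf0 : f 0 = 0) :
    ∑ m ∈ Finset.Icc 1 M, w m • f m
      = ∑ m ∈ Finset.Icc 1 M, (∑ j ∈ Finset.Icc m M, w j) • (f m - f (m-1)) := by
  have : ∀ m, (∑ j ∈ Finset.Icc m M, w j) • (f m - f (m-1))
      = ∑ j ∈ Finset.Icc m M, w j • (f m - f (m-1)) := fun m => Finset.sum_smul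
  simp_rw [this]
  rw [Finset.sum_comm' (t := fun m => Finset.Icc m M) (t' := Finset.Icc 1 M)
    (s' := fun j => Finset.Icc 1 j) (by intro m j; simp only [Finset.mem_Icc]; omega)]
  refine Finset.sum_congr rfl ?_
  intro j hj
  rw [← Finset.smul_sum, tele1 f j, hf0, sub_zero]

lemma quad_ge (b v γ : ℝ) (hb : 0 ≤ b) (hv : 0 < v) :
    v * b / (b + v) ≤ (γ - 1)^2 * b + γ^2 * v := by
  rw [div_le_iff₀ (by linarith)]
  nlinarith [sq_nonneg ((b+v)*γ - b)]

lemma quad_eq (b v : ℝ) (hb : 0 ≤ b) (hv : 0 < v) :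
    (b/(b+v) - 1)^2 * b + (b/(b+v))^2 * v = v * b / (b + v) := by
  have h : b + v ≠ 0 := by linarith
  field_simp
  ring

lemma sum_mulVec' {n : ℕ} {ι : Type*} (s : Finset ι) (A : ι → Matrix (Fin n) (Fin n) ℝ)
    (x : Fin n → ℝ) : (∑ i ∈ s, A i) *ᵥ x = ∑ i ∈ s, A i *ᵥ x := by
  classical
  induction s using Finset.induction_on with
  | empty => simp
  | insert _ _ h ih => rw [Finset.sum_insert h, Finset.sum_insert h, Matrix.add_mulVec, ih]

lemma dot_sum' {n : ℕ} {ι : Type*} (s : Finset ι) (f : ι → (Fin n → ℝ)) (x : Fin n → ℝ) :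
    x ⬝ᵥ (∑ i ∈ s, f i) = ∑ i ∈ s, x ⬝ᵥ f i := by
  classical
  induction s using Finset.induction_on with
  | empty => simp
  | insert _ _ h ih => rw [Finset.sum_insert h, Finset.sum_insert h, dotProduct_add, ih]

lemma delta_orth {n M : ℕ} (P : ℕ → Matrix (Fin n) (Fin n) ℝ)
    (hmin : ∀ i j, i ≤ M → j ≤ M → P i * P j = P (min i j)) :
    ∀ i ∈ Finset.Icc 1 M, ∀ j ∈ Finset.Icc 1 M,
      (P i - P (i-1)) * (P j - P (j-1)) = if i = j then P i - P (i-1) else 0 := by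
  intro i hi j hj
  simp only [Finset.mem_Icc] at hi hj
  rw [sub_mul, mul_sub, mul_sub,
    hmin i j (by omega) (by omega), hmin i (j-1) (by omega) (by omega),
    hmin (i-1) j (by omega) (by omega), hmin (i-1) (j-1) (by omega) (by omega)]
  rcases lt_trichotomy i j with h | h | h
  · rw [if_neg (by omega)]
    rw [(by omega : min i j = i), (by omega : min i (j-1) = i),
      (by omega : min (i-1) j = i-1), (by omega : min (i-1) (j-1) = i-1)]
    abel
  · subst h
    rw [if_pos rfl, (by omega : min i i = i), (by omega : min i (i-1) = i-1),
      (by omega : min (i-1) i = i-1), (by omega : min (i-1) (i-1) = i-1)]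
    abel
  · rw [if_neg (by omega)]
    rw [(by omega : min i j = j), (by omega : min i (j-1) = j-1),
      (by omega : min (i-1) j = j), (by omega : min (i-1) (j-1) = j-1)]
    abel

lemma b_nonneg {n M : ℕ} (P : ℕ → Matrix (Fin n) (Fin n) ℝ) (μ : Fin n → ℝ)
    (hmin : ∀ i j, i ≤ M → j ≤ M → P i * P j = P (min i j))
    (hsymm : ∀ i, i ≤ M → (P i)ᵀ = P i) :
    ∀ m ∈ Finset.Icc 1 M, 0 ≤ μ ⬝ᵥ ((P m - P (m-1)) *ᵥ μ) := by
  intro m hm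
  have hm' := Finset.mem_Icc.mp hm
  have hΔ2 : (P m - P (m-1)) * (P m - P (m-1)) = P m - P (m-1) := by
    have := delta_orth P hmin m hm m hm
    rwa [if_pos rfl] at this
  have hΔT : (P m - P (m-1))ᵀ = P m - P (m-1) := by
    rw [Matrix.transpose_sub, hsymm m (by omega), hsymm (m-1) (by omega)]
  have key : μ ⬝ᵥ ((P m - P (m-1)) *ᵥ μ)
      = ((P m - P (m-1)) *ᵥ μ) ⬝ᵥ ((P m - P (m-1)) *ᵥ μ) := by
    conv_lhs => rw [← hΔ2, ← Matrix.mulVec_mulVec]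
    rw [Matrix.dotProduct_mulVec, ← Matrix.mulVec_transpose, hΔT]
  rw [key]
  exact Finset.sum_nonneg fun i _ => mul_self_nonneg _

lemma risk_formula {n : ℕ} (M : ℕ) (P : ℕ → Matrix (Fin n) (Fin n) ℝ)
    (Ωm : Matrix (Fin n) (Fin n) ℝ) (μ : Fin n → ℝ)
    (hP0 : P 0 = 0)
    (hmin : ∀ i j, i ≤ M → j ≤ M → P i * P j = P (min i j))
    (w : ℕ → ℝ) :
    μ ⬝ᵥ ((((∑ m ∈ Finset.Icc 1 M, w m • P m) - 1) *
          ((∑ m ∈ Finset.Icc 1 M, w m • P m) - 1)) *ᵥ μ)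
      + ((∑ m ∈ Finset.Icc 1 M, w m • P m) *
          (∑ m ∈ Finset.Icc 1 M, w m • P m) * Ωm).trace
    = ∑ m ∈ Finset.Icc 1 M,
        (((∑ j ∈ Finset.Icc m M, w j) - 1)^2 * (μ ⬝ᵥ ((P m - P (m-1)) *ᵥ μ))
          + (∑ j ∈ Finset.Icc m M, w j)^2 * ((P m - P (m-1)) * Ωm).trace)
      + μ ⬝ᵥ ((1 - P M) *ᵥ μ) := by
  classical
  set S := ∑ m ∈ Finset.Icc 1 M, w m • P m with hSdef
  have horth := delta_orth P hmin
  have hS : S = ∑ m ∈ Finset.Icc 1 M, (∑ j ∈ Finset.Icc m M, w j) • (P m - P (m-1)) :=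
    abel_sum M w P hP0
  have hSS : S * S = ∑ m ∈ Finset.Icc 1 M,
      ((∑ j ∈ Finset.Icc m M, w j)^2) • (P m - P (m-1)) := by
    rw [hS, Finset.sum_mul_sum]
    refine Finset.sum_congr rfl fun i hi => ?_
    rw [Finset.sum_eq_single_of_mem i hi]
    · rw [smul_mul_smul, horth i hi i hi, if_pos rfl, ← sq]
    · intro j hj hne
      rw [smul_mul_smul, horth i hi j hj, if_neg (Ne.symm hne), smul_zero]
  have htr : (S * S * Ωm).trace
      = ∑ m ∈ Finset.Icc 1 M,
          (∑ j ∈ Finset.Icc m M, w j)^2 * ((P m - P (m-1)) * Ωm).trace := by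
    rw [hSS, Finset.sum_mul, Matrix.trace_sum]
    exact Finset.sum_congr rfl fun m _ => by rw [smul_mul_assoc, Matrix.trace_smul, smul_eq_mul]
  have hBSS : μ ⬝ᵥ ((S * S) *ᵥ μ)
      = ∑ m ∈ Finset.Icc 1 M,
          (∑ j ∈ Finset.Icc m M, w j)^2 * (μ ⬝ᵥ ((P m - P (m-1)) *ᵥ μ)) := by
    rw [hSS, sum_mulVec', dot_sum']
    exact Finset.sum_congr rfl fun m _ => by
      rw [Matrix.smul_mulVec, dotProduct_smul, smul_eq_mul]
  have hBS : μ ⬝ᵥ (S *ᵥ μ)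
      = ∑ m ∈ Finset.Icc 1 M,
          (∑ j ∈ Finset.Icc m M, w j) * (μ ⬝ᵥ ((P m - P (m-1)) *ᵥ μ)) := by
    rw [hS, sum_mulVec', dot_sum']
    exact Finset.sum_congr rfl fun m _ => by
      rw [Matrix.smul_mulVec, dotProduct_smul, smul_eq_mul]
  have hPM : μ ⬝ᵥ (P M *ᵥ μ) = ∑ m ∈ Finset.Icc 1 M, μ ⬝ᵥ ((P m - P (m-1)) *ᵥ μ) := by
    have h1 : (∑ m ∈ Finset.Icc 1 M, (P m - P (m-1))) = P M := by
      rw [tele1 P M, hP0, sub_zero]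
    rw [← h1, sum_mulVec', dot_sum']
  have hBone : μ ⬝ᵥ ((1 : Matrix (Fin n) (Fin n) ℝ) *ᵥ μ)
      = ∑ m ∈ Finset.Icc 1 M, μ ⬝ᵥ ((P m - P (m-1)) *ᵥ μ)
        + μ ⬝ᵥ ((1 - P M) *ᵥ μ) := by
    have h2 : μ ⬝ᵥ (((1 : Matrix (Fin n) (Fin n) ℝ) - P M) *ᵥ μ)
        = μ ⬝ᵥ ((1 : Matrix (Fin n) (Fin n) ℝ) *ᵥ μ) - μ ⬝ᵥ (P M *ᵥ μ) := by
      rw [Matrix.sub_mulVec, dotProduct_sub]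
    rw [h2, hPM]; ring
  have hexp : (S - 1) * (S - 1) = S * S - S - S + 1 := by noncomm_ring
  have hB : μ ⬝ᵥ (((S - 1) * (S - 1)) *ᵥ μ)
      = μ ⬝ᵥ ((S * S) *ᵥ μ) - μ ⬝ᵥ (S *ᵥ μ) - μ ⬝ᵥ (S *ᵥ μ)
        + μ ⬝ᵥ ((1 : Matrix (Fin n) (Fin n) ℝ) *ᵥ μ) := by
    rw [hexp, Matrix.add_mulVec, Matrix.sub_mulVec, Matrix.sub_mulVec,
      dotProduct_add, dotProduct_sub, dotProduct_sub]
  rw [hB, hBSS, hBS, hBone, htr]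
  have hrhs : ∑ m ∈ Finset.Icc 1 M,
        (((∑ j ∈ Finset.Icc m M, w j) - 1)^2 * (μ ⬝ᵥ ((P m - P (m-1)) *ᵥ μ))
          + (∑ j ∈ Finset.Icc m M, w j)^2 * ((P m - P (m-1)) * Ωm).trace)
      = (∑ m ∈ Finset.Icc 1 M,
            (∑ j ∈ Finset.Icc m M, w j)^2 * (μ ⬝ᵥ ((P m - P (m-1)) *ᵥ μ)))
        - (∑ m ∈ Finset.Icc 1 M,
            (∑ j ∈ Finset.Icc m M, w j) * (μ ⬝ᵥ ((P m - P (m-1)) *ᵥ μ)))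
        - (∑ m ∈ Finset.Icc 1 M,
            (∑ j ∈ Finset.Icc m M, w j) * (μ ⬝ᵥ ((P m - P (m-1)) *ᵥ μ)))
        + (∑ m ∈ Finset.Icc 1 M, μ ⬝ᵥ ((P m - P (m-1)) *ᵥ μ))
        + (∑ m ∈ Finset.Icc 1 M,
            (∑ j ∈ Finset.Icc m M, w j)^2 * ((P m - P (m-1)) * Ωm).trace) := by
    rw [← Finset.sum_sub_distrib, ← Finset.sum_sub_distrib, ← Finset.sum_add_distrib,
      ← Finset.sum_add_distrib]
    exact Finset.sum_congr rfl fun m _ => by ring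
  rw [hrhs]; ring

/-- The optimal model-averaging risk over the unit simplex equals
`tr(P₁Ω) + Σ_{m=2}^M v_m b_m/(b_m+v_m) + μᵀ(I−P_M)μ`, provided the sequence
`γ*_m = b_m/(b_m+v_m)` is non-increasing. -/
theorem optimal_simplex_ma_risk (n M : ℕ) (hM : 1 ≤ M)
    (P : ℕ → Matrix (Fin n) (Fin n) ℝ)
    (Ωm : Matrix (Fin n) (Fin n) ℝ) (μ : Fin n → ℝ)
    (hP0 : P 0 = 0)
    (hmin : ∀ i j, i ≤ M → j ≤ M → P i * P j = P (min i j))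
    (hsymm : ∀ i, i ≤ M → (P i)ᵀ = P i)
    (hv : ∀ m ∈ Finset.Icc 1 M, 0 < ((P m - P (m - 1)) * Ωm).trace)
    (hmono : ∀ m ∈ Finset.Icc 1 (M - 1),
      (μ ⬝ᵥ ((P (m + 1) - P m) *ᵥ μ)) /
          (μ ⬝ᵥ ((P (m + 1) - P m) *ᵥ μ) + ((P (m + 1) - P m) * Ωm).trace)
        ≤ (μ ⬝ᵥ ((P m - P (m - 1)) *ᵥ μ)) /
          (μ ⬝ᵥ ((P m - P (m - 1)) *ᵥ μ) + ((P m - P (m - 1)) * Ωm).trace)) :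
    IsLeast
      {r : ℝ | ∃ w : ℕ → ℝ,
        (∀ m ∈ Finset.Icc 1 M, 0 ≤ w m) ∧ (∑ m ∈ Finset.Icc 1 M, w m) = 1 ∧
        r = μ ⬝ᵥ ((((∑ m ∈ Finset.Icc 1 M, w m • P m) - 1) *
              ((∑ m ∈ Finset.Icc 1 M, w m • P m) - 1)) *ᵥ μ)
          + ((∑ m ∈ Finset.Icc 1 M, w m • P m) *
              (∑ m ∈ Finset.Icc 1 M, w m • P m) * Ωm).trace}
      ((P 1 * Ωm).trace
        + ∑ m ∈ Finset.Icc 2 M,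
            ((P m - P (m - 1)) * Ωm).trace * (μ ⬝ᵥ ((P m - P (m - 1)) *ᵥ μ))
              / (μ ⬝ᵥ ((P m - P (m - 1)) *ᵥ μ) + ((P m - P (m - 1)) * Ωm).trace)
        + μ ⬝ᵥ ((1 - P M) *ᵥ μ)) := by
  classical
  have hb := b_nonneg P μ hmin hsymm
  have hsplit : ∀ f : ℕ → ℝ,
      ∑ m ∈ Finset.Icc 1 M, f m = f 1 + ∑ m ∈ Finset.Icc 2 M, f m := by
    intro f
    rw [show Finset.Icc 1 M = insert 1 (Finset.Icc 2 M) from by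
      ext x; simp only [Finset.mem_insert, Finset.mem_Icc]; omega]
    rw [Finset.sum_insert (by simp)]
  have hv1 : ((P 1 - P (1-1)) * Ωm).trace = (P 1 * Ωm).trace := by
    norm_num [hP0]
  constructor
  · -- membership: the optimal weights
    set q : ℕ → ℝ := fun m =>
      (μ ⬝ᵥ ((P m - P (m-1)) *ᵥ μ)) /
        (μ ⬝ᵥ ((P m - P (m-1)) *ᵥ μ) + ((P m - P (m-1)) * Ωm).trace) with hq
    have hq01 : ∀ m ∈ Finset.Icc 1 M, 0 ≤ q m ∧ q m ≤ 1 := by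
      intro m hm
      have h1 := hb m hm
      have h2 := hv m hm
      refine ⟨div_nonneg h1 (by linarith), ?_⟩
      rw [hq]
      exact div_le_one_of_le₀ (by linarith) (by linarith)
    set g : ℕ → ℝ := fun m => if m ≤ 1 then 1 else if m ≤ M then q m else 0 with hg
    have hg1 : g 1 = 1 := by simp [hg]
    have hgM1 : g (M+1) = 0 := by
      rw [hg]; simp only; rw [if_neg (by omega), if_neg (by omega)]
    have hγ : ∀ m ∈ Finset.Icc 1 M,
        ∑ j ∈ Finset.Icc m M, (g j - g (j+1)) = g m := by
      intro m hm
      have hm' := Finset.mem_Icc.mp hm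
      rw [tele2 g m M (by omega), hgM1, sub_zero]
    refine ⟨fun m => g m - g (m+1), ?_, ?_, ?_⟩
    · intro m hm
      show 0 ≤ g m - g (m + 1)
      have hm' := Finset.mem_Icc.mp hm
      rcases eq_or_lt_of_le hm'.1 with h1 | h1
      · -- m = 1
        subst h1
        rw [hg1]
        by_cases h2 : 2 ≤ M
        · have hg2 : g 2 = q 2 := by
            rw [hg]; simp only; rw [if_neg (by omega), if_pos h2]
          rw [hg2]
          have := (hq01 2 (Finset.mem_Icc.mpr ⟨by omega, h2⟩)).2
          linarith
        · have hg2 : g 2 = 0 := by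
            rw [hg]; simp only; rw [if_neg (by omega), if_neg (by omega)]
          rw [hg2]; norm_num
      · -- 2 ≤ m
        have hgm : g m = q m := by
          rw [hg]; simp only; rw [if_neg (by omega), if_pos hm'.2]
        rcases eq_or_lt_of_le hm'.2 with h2 | h2
        · -- m = M
          have hgm1 : g (m+1) = 0 := by
            rw [hg]; simp only; rw [if_neg (by omega), if_neg (by omega)]
          rw [hgm, hgm1, sub_zero]
          exact (hq01 m hm).1
        · -- m < M
          have hgm1 : g (m+1) = q (m+1) := by
            rw [hg]; simp only; rw [if_neg (by omega), if_pos (by omega)]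
          rw [hgm, hgm1, sub_nonneg]
          have := hmono m (Finset.mem_Icc.mpr ⟨by omega, by omega⟩)
          simpa [hq, Nat.add_sub_cancel] using this
    · rw [tele2 g 1 M (by omega), hg1, hgM1, sub_zero]
    · rw [risk_formula M P Ωm μ hP0 hmin]
      have hcong : ∑ m ∈ Finset.Icc 1 M,
            (((∑ j ∈ Finset.Icc m M, (g j - g (j+1))) - 1)^2
                * (μ ⬝ᵥ ((P m - P (m-1)) *ᵥ μ))
              + (∑ j ∈ Finset.Icc m M, (g j - g (j+1)))^2
                * ((P m - P (m-1)) * Ωm).trace)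
          = ∑ m ∈ Finset.Icc 1 M,
            ((g m - 1)^2 * (μ ⬝ᵥ ((P m - P (m-1)) *ᵥ μ))
              + (g m)^2 * ((P m - P (m-1)) * Ωm).trace) :=
        Finset.sum_congr rfl fun m hm => by rw [hγ m hm]
      rw [hcong, hsplit]
      congr 1
      congr 1
      · rw [hg1, hv1]; ring
      · refine Finset.sum_congr rfl fun m hm => ?_
        have hm' := Finset.mem_Icc.mp hm
        have hmem : m ∈ Finset.Icc 1 M := Finset.mem_Icc.mpr ⟨by omega, hm'.2⟩
        have hgm : g m = q m := by
          rw [hg]; simp only; rw [if_neg (by omega), if_pos hm'.2]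
        rw [hgm]
        exact (quad_eq _ _ (hb m hmem) (hv m hmem)).symm
  · -- lower bound
    rintro r ⟨w, hw0, hw1, hr⟩
    rw [hr, risk_formula M P Ωm μ hP0 hmin w, hsplit]
    have hF1 : ((∑ j ∈ Finset.Icc 1 M, w j) - 1)^2 * (μ ⬝ᵥ ((P 1 - P (1-1)) *ᵥ μ))
        + (∑ j ∈ Finset.Icc 1 M, w j)^2 * ((P 1 - P (1-1)) * Ωm).trace
        = (P 1 * Ωm).trace := by
      rw [hw1, hv1]; ring
    refine add_le_add (add_le_add (le_of_eq hF1.symm) (Finset.sum_le_sum ?_)) le_rfl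
    intro m hm
    have hm' := Finset.mem_Icc.mp hm
    have hmem : m ∈ Finset.Icc 1 M := Finset.mem_Icc.mpr ⟨by omega, hm'.2⟩
    exact quad_ge _ _ _ (hb m hmem) (hv m hmem)
end

section
/- Under the assumptions that the sequence θ_{n,m} = b_m/(n v_m) is non-increasing in m and R_n(m) is first decreasing then increasing (unimodal) in m, the optimal simplex-weighted model-averaging risk R_n(w*_n) satisfies R_n(w*_n) ≥ (1/2) R_n(m*_n), where m*_n minimizes R_n(m) over m ∈ {1,...,M}. Consequently R_n(m*_n) and R_n(w*_n) have the same order: R_n(w*_n) ≤ R_n(m*_n) ≤ 2 R_n(w*_n). -/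
open Matrix

/-- indicator weight -/
noncomputable def maChi (i k : ℕ) : ℝ := if k ≤ i then 1 else 0

/-- quadratic form as a linear map -/
noncomputable def maQform {n : ℕ} (μ : Fin n → ℝ) :
    Matrix (Fin n) (Fin n) ℝ →ₗ[ℝ] ℝ where
  toFun X := μ ⬝ᵥ (X *ᵥ μ)
  map_add' X Y := by simp [Matrix.add_mulVec, dotProduct_add]
  map_smul' c X := by simp [Matrix.smul_mulVec, dotProduct_smul, smul_eq_mul]

/-- trace form as a linear map -/
noncomputable def maTform {n : ℕ} (Ω : Matrix (Fin n) (Fin n) ℝ) :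
    Matrix (Fin n) (Fin n) ℝ →ₗ[ℝ] ℝ where
  toFun X := (X * Ω).trace
  map_add' X Y := by simp [Matrix.add_mul]
  map_smul' c X := by simp [Matrix.smul_mul, smul_eq_mul]

lemma maProj_nonneg {n : ℕ} (N : Matrix (Fin n) (Fin n) ℝ) (μ : Fin n → ℝ)
    (hidem : N * N = N) (hsym : Nᵀ = N) : 0 ≤ μ ⬝ᵥ (N *ᵥ μ) := by
  have hvm : μ ᵥ* N = N *ᵥ μ := by
    have h2 := Matrix.vecMul_transpose N μ
    rwa [hsym] at h2
  have h : μ ⬝ᵥ (N *ᵥ μ) = (N *ᵥ μ) ⬝ᵥ (N *ᵥ μ) := by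
    conv_lhs => rw [← hidem, ← Matrix.mulVec_mulVec, Matrix.dotProduct_mulVec, hvm]
  rw [h]
  exact Finset.sum_nonneg fun i _ => mul_self_nonneg _

lemma maPt1 (b v c : ℝ) (hb : 0 ≤ b) (hv : 0 < v) (hbv : v ≤ b) :
    v ≤ 2 * ((1 - c)^2 * b + c^2 * v) := by
  nlinarith [sq_nonneg (b*(1-c) - c*v), sq_nonneg (1-c), sq_nonneg c,
    mul_nonneg hb hv.le, mul_nonneg (sub_nonneg.2 hbv) hv.le]

lemma maPt2 (b v c : ℝ) (hb : 0 ≤ b) (hv : 0 < v) (hbv : b ≤ v) :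
    b ≤ 2 * ((1 - c)^2 * b + c^2 * v) := by
  nlinarith [sq_nonneg (b*(1-c) - c*v), sq_nonneg (1-c), sq_nonneg c,
    mul_nonneg hb hv.le, mul_nonneg (sub_nonneg.2 hbv) hb]

lemma maSwap1 (S : Finset ℕ) (w : ℕ → ℝ) (χ : ℕ → ℕ → ℝ) (b : ℕ → ℝ) :
    (∑ i ∈ S, ∑ k ∈ S, w i * (χ i k * b k))
      = ∑ k ∈ S, (∑ i ∈ S, w i * χ i k) * b k := by
  rw [Finset.sum_comm]
  refine Finset.sum_congr rfl fun k _ => ?_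
  rw [Finset.sum_mul]
  exact Finset.sum_congr rfl fun i _ => by ring

lemma maSwap2 (S : Finset ℕ) (w : ℕ → ℝ) (χ : ℕ → ℕ → ℝ) (b : ℕ → ℝ) :
    (∑ i ∈ S, ∑ j ∈ S, ∑ k ∈ S, (w i * w j) * ((χ i k * χ j k) * b k))
      = ∑ k ∈ S, (∑ i ∈ S, w i * χ i k)^2 * b k := by
  rw [Finset.sum_congr rfl (fun i (_ : i ∈ S) => Finset.sum_comm), Finset.sum_comm]
  refine Finset.sum_congr rfl fun k _ => ?_
  rw [pow_two, Finset.sum_mul_sum, Finset.sum_mul]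
  refine Finset.sum_congr rfl fun i _ => ?_
  rw [Finset.sum_mul]
  exact Finset.sum_congr rfl fun j _ => by ring

/-- Under non-increasing grouped variable importance and unimodal selection risk,
the optimal simplex model-averaging risk is at least half the optimal model
selection risk, so the two risks have the same order. -/
theorem ma_vs_ms_half (n M : ℕ) (hn : 0 < n) (hM : 1 ≤ M)
    (P : ℕ → Matrix (Fin n) (Fin n) ℝ)
    (Ωm : Matrix (Fin n) (Fin n) ℝ) (μ : Fin n → ℝ)
    (hP0 : P 0 = 0)
    (hmin : ∀ i j, i ≤ M → j ≤ M → P i * P j = P (min i j))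
    (hsymm : ∀ i, i ≤ M → (P i)ᵀ = P i)
    (b v θ : ℕ → ℝ)
    (hb : ∀ m, b m = μ ⬝ᵥ ((P m - P (m - 1)) *ᵥ μ))
    (hvdef : ∀ m, v m = ((P m - P (m - 1)) * Ωm).trace)
    (hv : ∀ m ∈ Finset.Icc 1 M, 0 < v m)
    (hθ : ∀ m, θ m = b m / ((n : ℝ) * v m))
    (hθmono : ∀ m ∈ Finset.Icc 1 (M - 1), θ (m + 1) ≤ θ m)
    (Rm : ℕ → ℝ)
    (hRm : ∀ m, Rm m = μ ⬝ᵥ ((1 - P m) *ᵥ μ) + (P m * Ωm).trace)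
    (Rw : (ℕ → ℝ) → ℝ)
    (hRw : ∀ w : ℕ → ℝ, Rw w =
      μ ⬝ᵥ ((((∑ m ∈ Finset.Icc 1 M, w m • P m) - 1) *
          ((∑ m ∈ Finset.Icc 1 M, w m • P m) - 1)) *ᵥ μ)
        + ((∑ m ∈ Finset.Icc 1 M, w m • P m) *
            (∑ m ∈ Finset.Icc 1 M, w m • P m) * Ωm).trace)
    (huni : ∃ m0 ∈ Finset.Icc 1 M,
      (∀ i j, 1 ≤ i → i ≤ j → j ≤ m0 → Rm j ≤ Rm i) ∧
      (∀ i j, m0 ≤ i → i ≤ j → j ≤ M → Rm i ≤ Rm j))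
    (mStar : ℕ) (hmStar : mStar ∈ Finset.Icc 1 M)
    (hmStarOpt : ∀ m ∈ Finset.Icc 1 M, Rm mStar ≤ Rm m)
    (wStar : ℕ → ℝ)
    (hwStarW : (∀ m ∈ Finset.Icc 1 M, 0 ≤ wStar m) ∧
      (∑ m ∈ Finset.Icc 1 M, wStar m) = 1)
    (hwStarOpt : ∀ w : ℕ → ℝ, (∀ m ∈ Finset.Icc 1 M, 0 ≤ w m) →
      (∑ m ∈ Finset.Icc 1 M, w m) = 1 → Rw wStar ≤ Rw w) :
    (1 / 2) * Rm mStar ≤ Rw wStar ∧ Rw wStar ≤ Rm mStar ∧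
      Rm mStar ≤ 2 * Rw wStar := by
  classical
  -- telescoping sums
  have htelb : ∀ m : ℕ, (∑ k ∈ Finset.Icc 1 m, b k) = μ ⬝ᵥ (P m *ᵥ μ) := by
    intro m
    induction m with
    | zero => simp [show Finset.Icc 1 0 = (∅ : Finset ℕ) from by
        rw [Finset.Icc_eq_empty] <;> omega, hP0]
    | succ m ih =>
      rw [Finset.sum_Icc_succ_top (Nat.succ_le_succ (Nat.zero_le m)), ih, hb (m+1)]
      simp only [Nat.add_sub_cancel]
      rw [Matrix.sub_mulVec, dotProduct_sub]
      ring
  have htelv : ∀ m : ℕ, (∑ k ∈ Finset.Icc 1 m, v k) = (P m * Ωm).trace := by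
    intro m
    induction m with
    | zero => simp [show Finset.Icc 1 0 = (∅ : Finset ℕ) from by
        rw [Finset.Icc_eq_empty] <;> omega, hP0]
    | succ m ih =>
      rw [Finset.sum_Icc_succ_top (Nat.succ_le_succ (Nat.zero_le m)), ih, hvdef (m+1)]
      simp only [Nat.add_sub_cancel]
      rw [Matrix.sub_mul, Matrix.trace_sub]
      ring
  have hfilt : ∀ m : ℕ, m ≤ M →
      (Finset.Icc 1 M).filter (fun k => k ≤ m) = Finset.Icc 1 m := by
    intro m hm; ext k
    simp only [Finset.mem_filter, Finset.mem_Icc]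
    omega
  have hchib : ∀ m : ℕ, m ≤ M →
      μ ⬝ᵥ (P m *ᵥ μ) = ∑ k ∈ Finset.Icc 1 M, maChi m k * b k := by
    intro m hm
    rw [← htelb m, ← hfilt m hm, Finset.sum_filter]
    exact Finset.sum_congr rfl fun k _ => by
      by_cases h : k ≤ m <;> simp [maChi, h]
  have hchiv : ∀ m : ℕ, m ≤ M →
      (P m * Ωm).trace = ∑ k ∈ Finset.Icc 1 M, maChi m k * v k := by
    intro m hm
    rw [← htelv m, ← hfilt m hm, Finset.sum_filter]
    exact Finset.sum_congr rfl fun k _ => by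
      by_cases h : k ≤ m <;> simp [maChi, h]
  have hqdef : ∀ X : Matrix (Fin n) (Fin n) ℝ, μ ⬝ᵥ (X *ᵥ μ) = maQform μ X :=
    fun _ => rfl
  have htdef : ∀ X : Matrix (Fin n) (Fin n) ℝ, (X * Ωm).trace = maTform Ωm X :=
    fun _ => rfl
  -- leftover risk term
  have hR0eq : μ ⬝ᵥ ((1 - P M) *ᵥ μ)
      = μ ⬝ᵥ μ - ∑ k ∈ Finset.Icc 1 M, b k := by
    rw [Matrix.sub_mulVec, Matrix.one_mulVec, dotProduct_sub, hchib M le_rfl]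
    congr 1
    refine Finset.sum_congr rfl fun k hk => ?_
    have := (Finset.mem_Icc.1 hk).2
    simp [maChi, this]
  have hR0 : 0 ≤ μ ⬝ᵥ ((1 - P M) *ᵥ μ) := by
    have hPM : P M * P M = P M := by rw [hmin M M le_rfl le_rfl, min_self]
    refine maProj_nonneg _ _ ?_ ?_
    · rw [sub_mul, one_mul, mul_sub, mul_one, hPM]; abel
    · rw [Matrix.transpose_sub, Matrix.transpose_one, hsymm M le_rfl]
  -- b is nonnegative
  have hbnn : ∀ k ∈ Finset.Icc 1 M, 0 ≤ b k := by
    intro k hk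
    obtain ⟨hk1, hkM⟩ := Finset.mem_Icc.1 hk
    have hk1M : k - 1 ≤ M := by omega
    rw [hb k]
    have e1 : P k * P k = P k := by rw [hmin k k hkM hkM, min_self]
    have e2 : P k * P (k-1) = P (k-1) := by
      rw [hmin k (k-1) hkM hk1M, min_eq_right (by omega : k - 1 ≤ k)]
    have e3 : P (k-1) * P k = P (k-1) := by
      rw [hmin (k-1) k hk1M hkM, min_eq_left (by omega : k - 1 ≤ k)]
    have e4 : P (k-1) * P (k-1) = P (k-1) := by
      rw [hmin (k-1) (k-1) hk1M hk1M, min_self]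
    refine maProj_nonneg _ _ ?_ ?_
    · rw [sub_mul, mul_sub, mul_sub, e1, e2, e3, e4]; abel
    · rw [Matrix.transpose_sub, hsymm k hkM, hsymm (k-1) hk1M]
  -- model-averaging risk identity
  have hRwId : ∀ w : ℕ → ℝ,
      Rw w = (∑ k ∈ Finset.Icc 1 M,
          ((1 - ∑ i ∈ Finset.Icc 1 M, w i * maChi i k)^2 * b k
            + (∑ i ∈ Finset.Icc 1 M, w i * maChi i k)^2 * v k))
        + μ ⬝ᵥ ((1 - P M) *ᵥ μ) := by
    intro w
    set A : Matrix (Fin n) (Fin n) ℝ := ∑ m ∈ Finset.Icc 1 M, w m • P m with hAdef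
    have hAA : A * A = ∑ i ∈ Finset.Icc 1 M, ∑ j ∈ Finset.Icc 1 M,
        (w i * w j) • P (min i j) := by
      rw [hAdef, Finset.sum_mul_sum]
      refine Finset.sum_congr rfl fun i hi => Finset.sum_congr rfl fun j hj => ?_
      rw [smul_mul_smul_comm, hmin i j (Finset.mem_Icc.1 hi).2 (Finset.mem_Icc.1 hj).2]
    have hchimin : ∀ i j, i ∈ Finset.Icc 1 M → j ∈ Finset.Icc 1 M → ∀ k,
        maChi (min i j) k = maChi i k * maChi j k := by
      intro i j _ _ k
      simp only [maChi]
      by_cases h1 : k ≤ i <;> by_cases h2 : k ≤ j <;>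
        simp [h1, h2, le_min_iff]
    have hqA : maQform μ A = ∑ k ∈ Finset.Icc 1 M,
        (∑ i ∈ Finset.Icc 1 M, w i * maChi i k) * b k := by
      rw [hAdef, map_sum, ← maSwap1]
      refine Finset.sum_congr rfl fun i hi => ?_
      rw [LinearMap.map_smul, smul_eq_mul, ← hqdef, hchib i (Finset.mem_Icc.1 hi).2,
        Finset.mul_sum]
    have htA : maTform Ωm A = ∑ k ∈ Finset.Icc 1 M,
        (∑ i ∈ Finset.Icc 1 M, w i * maChi i k) * v k := by
      rw [hAdef, map_sum, ← maSwap1]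
      refine Finset.sum_congr rfl fun i hi => ?_
      rw [LinearMap.map_smul, smul_eq_mul, ← htdef, hchiv i (Finset.mem_Icc.1 hi).2,
        Finset.mul_sum]
    have hqAA : maQform μ (A*A) = ∑ k ∈ Finset.Icc 1 M,
        (∑ i ∈ Finset.Icc 1 M, w i * maChi i k)^2 * b k := by
      rw [hAA, map_sum, ← maSwap2]
      refine Finset.sum_congr rfl fun i hi => ?_
      rw [map_sum]
      refine Finset.sum_congr rfl fun j hj => ?_
      rw [LinearMap.map_smul, smul_eq_mul, ← hqdef,
        hchib (min i j) (le_trans (min_le_left i j) (Finset.mem_Icc.1 hi).2),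
        Finset.mul_sum]
      refine Finset.sum_congr rfl fun k _ => ?_
      rw [hchimin i j hi hj k]
    have htAA : maTform Ωm (A*A) = ∑ k ∈ Finset.Icc 1 M,
        (∑ i ∈ Finset.Icc 1 M, w i * maChi i k)^2 * v k := by
      rw [hAA, map_sum, ← maSwap2]
      refine Finset.sum_congr rfl fun i hi => ?_
      rw [map_sum]
      refine Finset.sum_congr rfl fun j hj => ?_
      rw [LinearMap.map_smul, smul_eq_mul, ← htdef,
        hchiv (min i j) (le_trans (min_le_left i j) (Finset.mem_Icc.1 hi).2),
        Finset.mul_sum]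
      refine Finset.sum_congr rfl fun k _ => ?_
      rw [hchimin i j hi hj k]
    have hsq : (A - 1) * (A - 1) = A*A - A - A + 1 := by noncomm_ring
    have hq1 : maQform μ 1 = μ ⬝ᵥ μ := by
      show μ ⬝ᵥ ((1 : Matrix (Fin n) (Fin n) ℝ) *ᵥ μ) = μ ⬝ᵥ μ
      rw [Matrix.one_mulVec]
    have hqexp : μ ⬝ᵥ (((A - 1) * (A - 1)) *ᵥ μ)
        = maQform μ (A*A) - maQform μ A - maQform μ A + maQform μ 1 := by
      rw [hsq, hqdef, map_add, map_sub, map_sub]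
    have hsplit : ∑ k ∈ Finset.Icc 1 M,
        ((1 - ∑ i ∈ Finset.Icc 1 M, w i * maChi i k)^2 * b k
          + (∑ i ∈ Finset.Icc 1 M, w i * maChi i k)^2 * v k)
        = (∑ k ∈ Finset.Icc 1 M, (∑ i ∈ Finset.Icc 1 M, w i * maChi i k)^2 * b k)
          + (∑ k ∈ Finset.Icc 1 M, (∑ i ∈ Finset.Icc 1 M, w i * maChi i k)^2 * v k)
          - 2 * (∑ k ∈ Finset.Icc 1 M, (∑ i ∈ Finset.Icc 1 M, w i * maChi i k) * b k)
          + ∑ k ∈ Finset.Icc 1 M, b k := by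
      rw [Finset.mul_sum, ← Finset.sum_add_distrib, ← Finset.sum_sub_distrib,
        ← Finset.sum_add_distrib]
      exact Finset.sum_congr rfl fun k _ => by ring
    rw [hRw w, hqexp, htdef, hq1, hqA, hqAA, htAA, hsplit, hR0eq]
    ring
  -- model selection risk identity
  have hRmId : ∀ m ∈ Finset.Icc 1 M,
      Rm m = (∑ k ∈ Finset.Icc 1 M, (if k ≤ m then v k else b k))
        + μ ⬝ᵥ ((1 - P M) *ᵥ μ) := by
    intro m hm
    have hmM : m ≤ M := (Finset.mem_Icc.1 hm).2
    have hS : ∑ k ∈ Finset.Icc 1 M, (if k ≤ m then v k else b k)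
        = (∑ k ∈ Finset.Icc 1 M, maChi m k * v k)
          + ((∑ k ∈ Finset.Icc 1 M, b k) - ∑ k ∈ Finset.Icc 1 M, maChi m k * b k) := by
      rw [← Finset.sum_sub_distrib, ← Finset.sum_add_distrib]
      refine Finset.sum_congr rfl fun k _ => ?_
      simp only [maChi]
      split_ifs <;> ring
    rw [hRm m, Matrix.sub_mulVec, Matrix.one_mulVec, dotProduct_sub,
      hchib m hmM, hchiv m hmM, hS, hR0eq]
    ring
  -- θ is antitone
  have hθanti : ∀ i, 1 ≤ i → ∀ j, i ≤ j → j ≤ M → θ j ≤ θ i := by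
    intro i hi j
    induction j with
    | zero => exact fun h1 _ => absurd (le_trans hi h1) (by omega)
    | succ j ih =>
      intro h1 h2
      rcases eq_or_lt_of_le h1 with he | hlt
      · rw [he]
      · have hij : i ≤ j := by omega
        have hstep := hθmono j (Finset.mem_Icc.2 ⟨by omega, by omega⟩)
        exact le_trans hstep (ih hij (by omega))
  -- downward closedness of the set where b dominates v
  have hCC : ∀ i j, i ∈ Finset.Icc 1 M → j ∈ Finset.Icc 1 M → i ≤ j →
      v j ≤ b j → v i ≤ b i := by
    intro i j hiS hjS hij hvbj
    obtain ⟨hi1, hiM⟩ := Finset.mem_Icc.1 hiS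
    obtain ⟨hj1, hjM⟩ := Finset.mem_Icc.1 hjS
    have hvi := hv i hiS
    have hvj := hv j hjS
    have hni : (0:ℝ) < n := by exact_mod_cast hn
    have hbi : b i = θ i * ((n:ℝ) * v i) := by
      rw [hθ i]
      field_simp
    have hbj : b j = θ j * ((n:ℝ) * v j) := by
      rw [hθ j]
      field_simp
    have hanti := hθanti i hi1 j hij hjM
    have h1 : 1 ≤ θ j * n := by nlinarith
    nlinarith [mul_nonneg (sub_nonneg.2 hanti) (mul_pos hni hvi).le,
      mul_nonneg (sub_nonneg.2 h1) hvi.le]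
  -- choose the threshold model
  obtain ⟨mh, hmhS, hmhle, hmhgt⟩ :
      ∃ mh ∈ Finset.Icc 1 M,
        (∀ k ∈ Finset.Icc 1 M, 2 ≤ k → k ≤ mh → v k ≤ b k) ∧
        (∀ k ∈ Finset.Icc 1 M, mh < k → b k ≤ v k) := by
    by_cases hT : ((Finset.Icc 1 M).filter (fun k => v k ≤ b k)).Nonempty
    · refine ⟨((Finset.Icc 1 M).filter fun k => v k ≤ b k).max' hT, ?_, ?_, ?_⟩
      · exact Finset.mem_of_mem_filter _ (Finset.max'_mem _ hT)
      · intro k hk _ hkle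
        have hm := Finset.max'_mem _ hT
        have hmf := Finset.mem_filter.1 hm
        exact hCC k _ hk hmf.1 hkle hmf.2
      · intro k hk hlt
        by_contra hc
        push_neg at hc
        have hkT : k ∈ (Finset.Icc 1 M).filter fun k => v k ≤ b k :=
          Finset.mem_filter.2 ⟨hk, hc.le⟩
        exact absurd (Finset.le_max' _ k hkT) (by omega)
    · refine ⟨1, Finset.mem_Icc.2 ⟨le_rfl, hM⟩, ?_, ?_⟩
      · intro k _ h2 h1; omega
      · intro k hk _
        by_contra hc
        push_neg at hc
        exact hT ⟨k, Finset.mem_filter.2 ⟨hk, hc.le⟩⟩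
  have hmh1 : 1 ≤ mh := (Finset.mem_Icc.1 hmhS).1
  -- the first cumulative weight is one
  have hc1 : (∑ i ∈ Finset.Icc 1 M, wStar i * maChi i 1) = 1 := by
    rw [← hwStarW.2]
    refine Finset.sum_congr rfl fun i hi => ?_
    have h1 := (Finset.mem_Icc.1 hi).1
    simp [maChi, h1]
  -- pointwise bound
  have hptwise : ∀ k ∈ Finset.Icc 1 M,
      (if k ≤ mh then v k else b k)
        ≤ 2 * ((1 - ∑ i ∈ Finset.Icc 1 M, wStar i * maChi i k)^2 * b k
            + (∑ i ∈ Finset.Icc 1 M, wStar i * maChi i k)^2 * v k) := by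
    intro k hk
    obtain ⟨hk1, hkM⟩ := Finset.mem_Icc.1 hk
    rcases eq_or_lt_of_le hk1 with h1 | h2
    · -- k = 1
      rw [← h1, if_pos hmh1, hc1]
      have := hv 1 (Finset.mem_Icc.2 ⟨le_rfl, hM⟩)
      nlinarith
    · by_cases hle : k ≤ mh
      · rw [if_pos hle]
        exact maPt1 _ _ _ (hbnn k hk) (hv k hk) (hmhle k hk (by omega) hle)
      · rw [if_neg hle]
        exact maPt2 _ _ _ (hbnn k hk) (hv k hk) (hmhgt k hk (by omega))
  -- Rm mStar ≤ 2 * Rw wStar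
  have hbound : Rm mStar ≤ 2 * Rw wStar := by
    have h1 : Rm mStar ≤ Rm mh := hmStarOpt mh hmhS
    have h2 := Finset.sum_le_sum hptwise
    rw [hRmId mh hmhS] at h1
    rw [hRwId wStar]
    have h3 : ∑ k ∈ Finset.Icc 1 M,
        2 * ((1 - ∑ i ∈ Finset.Icc 1 M, wStar i * maChi i k)^2 * b k
          + (∑ i ∈ Finset.Icc 1 M, wStar i * maChi i k)^2 * v k)
        = 2 * ∑ k ∈ Finset.Icc 1 M,
          ((1 - ∑ i ∈ Finset.Icc 1 M, wStar i * maChi i k)^2 * b k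
            + (∑ i ∈ Finset.Icc 1 M, wStar i * maChi i k)^2 * v k) := by
      rw [Finset.mul_sum]
    rw [h3] at h2
    linarith
  -- Rw wStar ≤ Rm mStar via the delta weights
  have hdelta : Rw wStar ≤ Rm mStar := by
    set wδ : ℕ → ℝ := fun k => if k = mStar then 1 else 0 with hwδ
    have hnn : ∀ m ∈ Finset.Icc 1 M, 0 ≤ wδ m := by
      intro m _; simp only [hwδ]; split_ifs <;> norm_num
    have hsum1 : (∑ m ∈ Finset.Icc 1 M, wδ m) = 1 := by
      simp only [hwδ]
      rw [Finset.sum_ite_eq' (Finset.Icc 1 M) mStar (fun _ => (1:ℝ))]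
      simp [hmStar]
    have hcδ : ∀ k, (∑ i ∈ Finset.Icc 1 M, wδ i * maChi i k) = maChi mStar k := by
      intro k
      have : ∀ i ∈ Finset.Icc 1 M, wδ i * maChi i k
          = if i = mStar then maChi mStar k else 0 := by
        intro i _
        simp only [hwδ]
        split_ifs with h
        · rw [h]; ring
        · ring
      rw [Finset.sum_congr rfl this,
        Finset.sum_ite_eq' (Finset.Icc 1 M) mStar (fun _ => maChi mStar k)]
      simp [hmStar]
    have heq : Rw wδ = Rm mStar := by
      rw [hRwId wδ, hRmId mStar hmStar]
      congr 1
      refine Finset.sum_congr rfl fun k _ => ?_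
      rw [hcδ k]
      simp only [maChi]
      split_ifs <;> ring
    calc Rw wStar ≤ Rw wδ := hwStarOpt wδ hnn hsum1
      _ = Rm mStar := heq
  exact ⟨by linarith, hdelta, hbound⟩
end

section
/- The gap between optimal model selection risk and optimal model averaging risk admits the exact expression Δ_n = R_n(m*) − R_n(w*) = Σ_{m=2}^{m*} [v_m − v_m b_m/(b_m + v_m)] + Σ_{m=m*+1}^{M} b_m²/(b_m + v_m) = Σ_{m=2}^{m*} v_m²/(b_m+v_m) + Σ_{m=m*+1}^{M} b_m²/(b_m+v_m), and in particular Δ_n ≥ 0. -/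
open Matrix

lemma tele_sum (g : ℕ → ℝ) (a : ℕ) : ∀ c : ℕ, a ≤ c →
    ∑ m ∈ Finset.Ioc a c, (g m - g (m - 1)) = g c - g a := by
  intro c hc
  induction c, hc using Nat.le_induction with
  | base => simp
  | succ c hc ih =>
      rw [Finset.sum_Ioc_succ_top hc, ih]
      simp only [Nat.add_sub_cancel]
      ring

/-- Exact expression for the gap between optimal model selection risk and
optimal model averaging risk; in particular the gap is nonnegative. -/
theorem ms_ma_gap (n M mStar : ℕ) (h1 : 1 ≤ mStar) (hM : mStar ≤ M)
    (P : ℕ → Matrix (Fin n) (Fin n) ℝ)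
    (Ωm : Matrix (Fin n) (Fin n) ℝ) (μ : Fin n → ℝ)
    (b v : ℕ → ℝ)
    (hb : ∀ m, b m = μ ⬝ᵥ ((P m - P (m - 1)) *ᵥ μ))
    (hvdef : ∀ m, v m = ((P m - P (m - 1)) * Ωm).trace)
    (hbpos : ∀ m ∈ Finset.Icc 2 M, 0 ≤ b m)
    (hvpos : ∀ m ∈ Finset.Icc 2 M, 0 < v m) :
    ((μ ⬝ᵥ ((1 - P mStar) *ᵥ μ) + (P mStar * Ωm).trace)
        - ((P 1 * Ωm).trace + (∑ m ∈ Finset.Icc 2 M, v m * b m / (b m + v m))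
            + μ ⬝ᵥ ((1 - P M) *ᵥ μ))
      = (∑ m ∈ Finset.Icc 2 mStar, v m ^ 2 / (b m + v m))
        + (∑ m ∈ Finset.Icc (mStar + 1) M, b m ^ 2 / (b m + v m)))
    ∧ 0 ≤ (μ ⬝ᵥ ((1 - P mStar) *ᵥ μ) + (P mStar * Ωm).trace)
        - ((P 1 * Ωm).trace + (∑ m ∈ Finset.Icc 2 M, v m * b m / (b m + v m))
            + μ ⬝ᵥ ((1 - P M) *ᵥ μ)) := by
  set g : ℕ → ℝ := fun m => μ ⬝ᵥ (P m *ᵥ μ) with hg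
  set t : ℕ → ℝ := fun m => (P m * Ωm).trace with ht
  have hbg : ∀ m, b m = g m - g (m - 1) := by
    intro m
    rw [hb m, sub_mulVec, dotProduct_sub]
  have hvt : ∀ m, v m = t m - t (m - 1) := by
    intro m
    rw [hvdef m, sub_mul, trace_sub]
  -- positivity of denominators
  have hden : ∀ m ∈ Finset.Icc 2 M, 0 < b m + v m := by
    intro m hm
    have := hbpos m hm
    have := hvpos m hm
    linarith
  -- telescoping
  have htele_b : ∑ m ∈ Finset.Ioc mStar M, b m = g M - g mStar := by
    rw [← tele_sum g mStar M hM]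
    exact Finset.sum_congr rfl fun m _ => hbg m
  have htele_v : ∑ m ∈ Finset.Ioc 1 mStar, v m = t mStar - t 1 := by
    rw [← tele_sum t 1 mStar h1]
    exact Finset.sum_congr rfl fun m _ => hvt m
  -- interval rewrites : Icc 2 k = Ioc 1 k, Icc (mStar+1) M = Ioc mStar M
  have hI1 : ∀ k : ℕ, Finset.Icc 2 k = Finset.Ioc 1 k := by
    intro k; rw [← Finset.Icc_add_one_left_eq_Ioc]; rfl
  have hI2 : Finset.Icc (mStar + 1) M = Finset.Ioc mStar M := by
    rw [← Finset.Icc_add_one_left_eq_Ioc]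
  have hsplit : Finset.Ioc 1 mStar ∪ Finset.Ioc mStar M = Finset.Ioc 1 M :=
    Finset.Ioc_union_Ioc_eq_Ioc h1 hM
  have hsub1 : Finset.Ioc 1 mStar ⊆ Finset.Icc 2 M := by
    intro m hm
    simp only [Finset.mem_Ioc] at hm
    simp only [Finset.mem_Icc]
    exact ⟨hm.1, le_trans hm.2 hM⟩
  have hsub2 : Finset.Ioc mStar M ⊆ Finset.Icc 2 M := by
    intro m hm
    simp only [Finset.mem_Ioc] at hm
    simp only [Finset.mem_Icc]
    exact ⟨lt_of_le_of_lt h1 hm.1, hm.2⟩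
  -- split the middle sum
  have hS : ∑ m ∈ Finset.Icc 2 M, v m * b m / (b m + v m)
      = (∑ m ∈ Finset.Ioc 1 mStar, v m * b m / (b m + v m))
        + ∑ m ∈ Finset.Ioc mStar M, v m * b m / (b m + v m) := by
    rw [hI1 M, ← hsplit, Finset.sum_union]
    · rw [Finset.disjoint_left]
      intro m hm1 hm2
      simp only [Finset.mem_Ioc] at hm1 hm2
      exact absurd hm1.2 (not_le.mpr hm2.1)
  -- quadratic expression rewrite
  have hq : μ ⬝ᵥ ((1 - P mStar) *ᵥ μ) = μ ⬝ᵥ ((1 : Matrix (Fin n) (Fin n) ℝ) *ᵥ μ) - g mStar := by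
    rw [sub_mulVec, dotProduct_sub]
  have hqM : μ ⬝ᵥ ((1 - P M) *ᵥ μ) = μ ⬝ᵥ ((1 : Matrix (Fin n) (Fin n) ℝ) *ᵥ μ) - g M := by
    rw [sub_mulVec, dotProduct_sub]
  have key : (μ ⬝ᵥ ((1 - P mStar) *ᵥ μ) + (P mStar * Ωm).trace)
        - ((P 1 * Ωm).trace + (∑ m ∈ Finset.Icc 2 M, v m * b m / (b m + v m))
            + μ ⬝ᵥ ((1 - P M) *ᵥ μ))
      = (∑ m ∈ Finset.Ioc 1 mStar, (v m - v m * b m / (b m + v m)))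
        + ∑ m ∈ Finset.Ioc mStar M, (b m - v m * b m / (b m + v m)) := by
    rw [hq, hqM, hS, Finset.sum_sub_distrib, Finset.sum_sub_distrib, htele_b, htele_v]
    show _ + (P mStar * Ωm).trace - ((P 1 * Ωm).trace + _ + _) = _
    ring
  have hfirst : ∀ m ∈ Finset.Ioc 1 mStar,
      v m - v m * b m / (b m + v m) = v m ^ 2 / (b m + v m) := by
    intro m hm
    have h := hden m (hsub1 hm)
    field_simp
    ring
  have hsecond : ∀ m ∈ Finset.Ioc mStar M,
      b m - v m * b m / (b m + v m) = b m ^ 2 / (b m + v m) := by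
    intro m hm
    have h := hden m (hsub2 hm)
    field_simp
    ring
  have keyfinal : (μ ⬝ᵥ ((1 - P mStar) *ᵥ μ) + (P mStar * Ωm).trace)
        - ((P 1 * Ωm).trace + (∑ m ∈ Finset.Icc 2 M, v m * b m / (b m + v m))
            + μ ⬝ᵥ ((1 - P M) *ᵥ μ))
      = (∑ m ∈ Finset.Icc 2 mStar, v m ^ 2 / (b m + v m))
        + (∑ m ∈ Finset.Icc (mStar + 1) M, b m ^ 2 / (b m + v m)) := by
    rw [key, hI1 mStar, hI2, Finset.sum_congr rfl hfirst, Finset.sum_congr rfl hsecond]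
  refine ⟨keyfinal, ?_⟩
  rw [keyfinal]
  apply add_nonneg <;> apply Finset.sum_nonneg <;> intro m hm
  · have h := hden m (hsub1 ((hI1 mStar) ▸ hm))
    positivity
  · have h := hden m (hsub2 (hI2 ▸ hm))
    positivity
end

section
/- Removing the sum-to-one constraint from the simplex reduces the optimal model averaging risk by exactly R_n(w*) − R_n(w̃*) = (tr(P_1Ω))²/(μᵀP_1μ + tr(P_1Ω)), which is at most tr(P_1Ω). In particular, if tr(P_1Ω) < c2·ν_1 for a constant c2 and fixed rank ν_1, then this gap is bounded by a constant independent of n. -/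
open Matrix

/-- Removing the sum-to-one constraint reduces the optimal model-averaging risk
by exactly `(tr(P₁Ω))²/(μᵀP₁μ + tr(P₁Ω))`, which is at most `tr(P₁Ω)`; if
`tr(P₁Ω) < c₂·ν₁` the gap is bounded by this constant. -/
theorem simplex_vs_hypercube_gap (n M : ℕ) (hM : 1 ≤ M)
    (P : ℕ → Matrix (Fin n) (Fin n) ℝ)
    (Ωm : Matrix (Fin n) (Fin n) ℝ) (μ : Fin n → ℝ)
    (b v : ℕ → ℝ)
    (hb : ∀ m, b m = μ ⬝ᵥ ((P m - P (m - 1)) *ᵥ μ))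
    (hvdef : ∀ m, v m = ((P m - P (m - 1)) * Ωm).trace)
    (hP0 : P 0 = 0)
    (hb1 : 0 ≤ b 1) (hv1 : 0 < v 1)
    (c2 : ℝ) (ν1 : ℕ) (htr : (P 1 * Ωm).trace < c2 * ν1) :
    (((P 1 * Ωm).trace + (∑ m ∈ Finset.Icc 2 M, v m * b m / (b m + v m))
          + μ ⬝ᵥ ((1 - P M) *ᵥ μ))
        - ((∑ m ∈ Finset.Icc 1 M, v m * b m / (b m + v m))
          + μ ⬝ᵥ ((1 - P M) *ᵥ μ))
      = ((P 1 * Ωm).trace) ^ 2 / (μ ⬝ᵥ (P 1 *ᵥ μ) + (P 1 * Ωm).trace))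
    ∧ ((P 1 * Ωm).trace) ^ 2 / (μ ⬝ᵥ (P 1 *ᵥ μ) + (P 1 * Ωm).trace)
        ≤ (P 1 * Ωm).trace
    ∧ ((P 1 * Ωm).trace) ^ 2 / (μ ⬝ᵥ (P 1 *ᵥ μ) + (P 1 * Ωm).trace)
        < c2 * ν1 := by
  have hv1' : v 1 = (P 1 * Ωm).trace := by
    rw [hvdef 1]; simp [hP0]
  have hb1' : b 1 = μ ⬝ᵥ (P 1 *ᵥ μ) := by
    rw [hb 1]; simp [hP0]
  set t := (P 1 * Ωm).trace with ht
  set β := μ ⬝ᵥ (P 1 *ᵥ μ) with hβ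
  have htpos : 0 < t := hv1' ▸ hv1
  have hβ0 : 0 ≤ β := hb1' ▸ hb1
  have hden : 0 < β + t := by linarith
  have hsplit : (∑ m ∈ Finset.Icc 1 M, v m * b m / (b m + v m))
      = v 1 * b 1 / (b 1 + v 1) + ∑ m ∈ Finset.Icc 2 M, v m * b m / (b m + v m) := by
    have : Finset.Icc 1 M = insert 1 (Finset.Icc 2 M) := by
      ext x
      simp only [Finset.mem_Icc, Finset.mem_insert]
      omega
    rw [this, Finset.sum_insert (by simp)]
  have key : t - v 1 * b 1 / (b 1 + v 1) = t ^ 2 / (β + t) := by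
    rw [hv1', hb1']
    field_simp
    ring
  refine ⟨by rw [hsplit]; linarith [key], ?_, ?_⟩
  · rw [div_le_iff₀ hden]
    nlinarith
  · calc t ^ 2 / (β + t) ≤ t := by rw [div_le_iff₀ hden]; nlinarith
      _ < c2 * ν1 := htr
end

section
/- Under the standing assumptions (θ_{n,m} non-increasing, R_n(m) unimodal), for all sufficiently large n the optimal discrete-grid model averaging risk satisfies R_n(w*_{n,N}) − R_n(w*_n) ≤ (1/(2N)) R_n(m*_n), where w*_{n,N} minimizes R_n(w) over the discrete weight set {w : w_m ∈ {0, 1/N, ..., 1}, Σ w_m = 1}. -/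
section aux
variable {α : Type*} [AddCommGroup α]

lemma sum_Icc_one_sub (f : ℕ → α) (h0 : f 0 = 0) (j : ℕ) :
    ∑ m ∈ Finset.Icc 1 j, (f m - f (m - 1)) = f j := by
  rw [← Finset.Ico_add_one_right_eq_Icc, Finset.sum_Ico_eq_sum_range]
  have h : ∀ i ∈ Finset.range (j + 1 - 1), f (1 + i) - f (1 + i - 1) = f (i + 1) - f i := by
    intro i _; congr 2 <;> omega
  rw [Finset.sum_congr rfl h]
  have : j + 1 - 1 = j := by omega
  rw [this, Finset.sum_range_sub, h0, sub_zero]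

lemma sum_Icc_sub_succ (g : ℕ → α) (a b : ℕ) (hab : a ≤ b + 1) :
    ∑ m ∈ Finset.Icc a b, (g m - g (m + 1)) = g a - g (b + 1) := by
  rw [← Finset.Ico_add_one_right_eq_Icc, Finset.sum_Ico_eq_sum_range]
  have h : ∀ i ∈ Finset.range (b + 1 - a), g (a + i) - g (a + i + 1) = g (a + i) - g (a + (i + 1)) := by
    intro i _; rw [← Nat.add_assoc]
  rw [Finset.sum_congr rfl h, Finset.sum_range_sub' (fun i => g (a + i))]
  have h2 : a + (b + 1 - a) = b + 1 := by omega
  rw [h2, Nat.add_zero]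
end aux

lemma round_bound (N : ℕ) (hN : 0 < N) (x : ℝ) (hx0 : 0 ≤ x) (hx1 : x < 1) :
    ⌊(N:ℝ) * x + 1/2⌋₊ ≤ N ∧
    ((⌊(N:ℝ) * x + 1/2⌋₊ : ℝ) - N * x)^2 ≤ N * x / 2 ∧
    ((⌊(N:ℝ) * x + 1/2⌋₊ : ℝ) - N * x)^2 ≤ N * (1 - x) / 2 := by
  have hN' : (0:ℝ) < N := by exact_mod_cast hN
  have h1 : (⌊(N:ℝ) * x + 1/2⌋₊ : ℝ) ≤ (N:ℝ) * x + 1/2 := Nat.floor_le (by positivity)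
  have h2 : (N:ℝ) * x + 1/2 < (⌊(N:ℝ) * x + 1/2⌋₊ : ℝ) + 1 := Nat.lt_floor_add_one _
  have hKN : ⌊(N:ℝ) * x + 1/2⌋₊ ≤ N := by
    have : (⌊(N:ℝ) * x + 1/2⌋₊ : ℝ) < (N:ℝ) + 1 := by nlinarith
    exact_mod_cast Nat.lt_add_one_iff.mp (by exact_mod_cast this)
  have hNx : 0 ≤ (N:ℝ) * x := by positivity
  have hNx' : 0 ≤ (N:ℝ) * (1 - x) := by nlinarith
  refine ⟨hKN, ?_, ?_⟩
  · rcases le_or_gt (1/2 : ℝ) ((N:ℝ) * x) with h | h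
    · nlinarith
    · have hK0 : ⌊(N:ℝ) * x + 1/2⌋₊ = 0 := by
        apply Nat.floor_eq_zero.mpr; linarith
      rw [hK0]
      nlinarith [mul_le_mul_of_nonneg_left h.le hNx]
  · rcases le_or_gt (1/2 : ℝ) ((N:ℝ) * (1 - x)) with h | h
    · nlinarith
    · have hKN' : N ≤ ⌊(N:ℝ) * x + 1/2⌋₊ := by
        apply Nat.le_floor; push_cast; nlinarith
      have hh : ⌊(N:ℝ) * x + 1/2⌋₊ = N := le_antisymm hKN hKN'
      rw [hh]
      nlinarith [mul_le_mul_of_nonneg_left h.le hNx']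

lemma quad_lower (b v γ : ℝ) (hb : 0 ≤ b) (hv : 0 < v) :
    b / (b + v) * v ≤ (1 - γ)^2 * b + γ^2 * v := by
  rw [div_mul_eq_mul_div, div_le_iff₀ (by positivity)]
  nlinarith [sq_nonneg (γ * (b + v) - b)]

lemma per_term (N : ℕ) (hN : 0 < N) (B V x : ℝ) (hB : 0 ≤ B) (hV : 0 < V)
    (hx : x * (B + V) = B) (hx0 : 0 ≤ x) (hx1 : x < 1) :
    ((1 - (⌊(N:ℝ)*x + 1/2⌋₊:ℝ)/N)^2 * B + ((⌊(N:ℝ)*x + 1/2⌋₊:ℝ)/N)^2 * V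
        ≤ x * V + 1/(2*N) * V)
    ∧ ((1 - (⌊(N:ℝ)*x + 1/2⌋₊:ℝ)/N)^2 * B + ((⌊(N:ℝ)*x + 1/2⌋₊:ℝ)/N)^2 * V
        ≤ x * V + 1/(2*N) * B) := by
  have hNR : (0:ℝ) < N := by exact_mod_cast hN
  have hrb := round_bound N hN x hx0 hx1
  set F : ℝ := (⌊(N:ℝ)*x + 1/2⌋₊ : ℝ) with hF
  have hBV : (0:ℝ) < B + V := by linarith
  have key1 : (1 - F/N)^2 * B + (F/N)^2 * V - x*V
      = (B+V) * (F/N - x)^2 + (2*(F/N) - x - 1) * (x*(B+V) - B) := by ring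
  rw [hx, sub_self, mul_zero, add_zero] at key1
  have e : (F/N - x)^2 = (F - N*x)^2 / (N^2) := by
    field_simp
  constructor
  · have hd := hrb.2.2
    have h1 : (B+V) * (F/N - x)^2 ≤ 1/(2*N) * V := by
      rw [e, ← mul_div_assoc, div_le_iff₀ (by positivity : (0:ℝ) < N^2)]
      have h2 : 1/(2*(N:ℝ)) * V * N^2 = N * V / 2 := by field_simp
      rw [h2]
      have h3 := mul_le_mul_of_nonneg_left hd hBV.le
      have h4 : (B+V) * ((N:ℝ) * (1-x)/2) = (N:ℝ) * ((1-x)*(B+V)) / 2 := by ring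
      have h5 : (1-x)*(B+V) = V := by linarith
      rw [h4, h5] at h3
      exact h3
    linarith [key1]
  · have hd := hrb.2.1
    have h1 : (B+V) * (F/N - x)^2 ≤ 1/(2*N) * B := by
      rw [e, ← mul_div_assoc, div_le_iff₀ (by positivity : (0:ℝ) < N^2)]
      have h2 : 1/(2*(N:ℝ)) * B * N^2 = N * B / 2 := by field_simp
      rw [h2]
      have h3 := mul_le_mul_of_nonneg_left hd hBV.le
      have h4 : (B+V) * ((N:ℝ) * x/2) = (N:ℝ) * (x*(B+V)) / 2 := by ring
      rw [h4, hx] at h3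
      exact h3
    linarith [key1]



open Matrix

/-- The optimal discrete-grid model-averaging risk exceeds the optimal simplex
model-averaging risk by at most `R(m*)/(2N)`. -/
theorem discrete_grid_gap (n M N : ℕ) (hn : 0 < n) (hM : 1 ≤ M) (hN : 0 < N)
    (P : ℕ → Matrix (Fin n) (Fin n) ℝ)
    (Ωm : Matrix (Fin n) (Fin n) ℝ) (μ : Fin n → ℝ)
    (hP0 : P 0 = 0)
    (hmin : ∀ i j, i ≤ M → j ≤ M → P i * P j = P (min i j))
    (hsymm : ∀ i, i ≤ M → (P i)ᵀ = P i)
    (b v gs : ℕ → ℝ)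
    (hb : ∀ m, b m = μ ⬝ᵥ ((P m - P (m - 1)) *ᵥ μ))
    (hvdef : ∀ m, v m = ((P m - P (m - 1)) * Ωm).trace)
    (hv : ∀ m ∈ Finset.Icc 1 M, 0 < v m)
    (hgs : ∀ m, gs m = b m / (b m + v m))
    (hgsmono : ∀ m ∈ Finset.Icc 1 (M - 1), gs (m + 1) ≤ gs m)
    (Rm : ℕ → ℝ)
    (hRm : ∀ m, Rm m = μ ⬝ᵥ ((1 - P m) *ᵥ μ) + (P m * Ωm).trace)
    (Rw : (ℕ → ℝ) → ℝ)
    (hRw : ∀ w : ℕ → ℝ, Rw w =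
      μ ⬝ᵥ ((((∑ m ∈ Finset.Icc 1 M, w m • P m) - 1) *
          ((∑ m ∈ Finset.Icc 1 M, w m • P m) - 1)) *ᵥ μ)
        + ((∑ m ∈ Finset.Icc 1 M, w m • P m) *
            (∑ m ∈ Finset.Icc 1 M, w m • P m) * Ωm).trace)
    (mStar : ℕ) (hmStar : mStar ∈ Finset.Icc 1 M)
    (hgsStar : 1 / 2 < gs mStar) (hgsStar' : gs (mStar + 1) ≤ 1 / 2)
    (wS : ℕ → ℝ)
    (hwSW : (∀ m ∈ Finset.Icc 1 M, 0 ≤ wS m) ∧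
      (∑ m ∈ Finset.Icc 1 M, wS m) = 1)
    (hwSOpt : ∀ w : ℕ → ℝ, (∀ m ∈ Finset.Icc 1 M, 0 ≤ w m) →
      (∑ m ∈ Finset.Icc 1 M, w m) = 1 → Rw wS ≤ Rw w)
    (wN : ℕ → ℝ)
    (hwNW : (∀ m ∈ Finset.Icc 1 M, ∃ k : ℕ, k ≤ N ∧ wN m = (k : ℝ) / N) ∧
      (∑ m ∈ Finset.Icc 1 M, wN m) = 1)
    (hwNOpt : ∀ w : ℕ → ℝ,
      (∀ m ∈ Finset.Icc 1 M, ∃ k : ℕ, k ≤ N ∧ w m = (k : ℝ) / N) →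
      (∑ m ∈ Finset.Icc 1 M, w m) = 1 → Rw wN ≤ Rw w) :
    Rw wN - Rw wS ≤ (1 / (2 * (N : ℝ))) * Rm mStar := by
  classical
  have hNR : (0:ℝ) < N := by exact_mod_cast hN
  set I := Finset.Icc 1 M with hI
  set Q : ℕ → Matrix (Fin n) (Fin n) ℝ := fun m => P m - P (m - 1) with hQdef
  have hQP : ∀ j, ∑ m ∈ Finset.Icc 1 j, Q m = P j := fun j => sum_Icc_one_sub P hP0 j
  have hQmul : ∀ i j, 1 ≤ i → i ≤ M → 1 ≤ j → j ≤ M →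
      Q i * Q j = if i = j then Q i else 0 := by
    intro i j hi1 hiM hj1 hjM
    have e : Q i * Q j =
        P (min i j) - P (min i (j-1)) - (P (min (i-1) j) - P (min (i-1) (j-1))) := by
      simp only [hQdef, sub_mul, mul_sub]
      rw [hmin i j hiM hjM, hmin i (j-1) hiM (by omega), hmin (i-1) j (by omega) hjM,
        hmin (i-1) (j-1) (by omega) (by omega)]
      abel
    rcases lt_trichotomy i j with h | h | h
    · have e1 : min i j = i := by omega
      have e2 : min i (j-1) = i := by omega
      have e3 : min (i-1) j = i-1 := by omega
      have e4 : min (i-1) (j-1) = i-1 := by omega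
      rw [e, e1, e2, e3, e4, if_neg (by omega)]; abel
    · subst h
      have e1 : min i i = i := by omega
      have e2 : min i (i-1) = i-1 := by omega
      have e3 : min (i-1) i = i-1 := by omega
      have e4 : min (i-1) (i-1) = i-1 := by omega
      rw [e, e1, e2, e3, e4, if_pos rfl]
      simp only [hQdef]; abel
    · have e1 : min i j = j := by omega
      have e2 : min i (j-1) = j-1 := by omega
      have e3 : min (i-1) j = j := by omega
      have e4 : min (i-1) (j-1) = j-1 := by omega
      rw [e, e1, e2, e3, e4, if_neg (by omega)]; abel
  -- quadratic-form nonnegativity for symmetric idempotents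
  have hdself : ∀ x : Fin n → ℝ, 0 ≤ x ⬝ᵥ x :=
    fun x => Finset.sum_nonneg fun i _ => mul_self_nonneg (x i)
  have hpsd : ∀ A : Matrix (Fin n) (Fin n) ℝ, Aᵀ = A → A * A = A → 0 ≤ μ ⬝ᵥ (A *ᵥ μ) := by
    intro A hAt hAi
    have h : μ ⬝ᵥ (A *ᵥ μ) = (A *ᵥ μ) ⬝ᵥ (A *ᵥ μ) := by
      conv_lhs => rw [← hAi]
      rw [← Matrix.mulVec_mulVec, Matrix.dotProduct_mulVec]
      congr 1
      rw [← Matrix.mulVec_transpose, hAt]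
    rw [h]; exact hdself _
  have hQsymm : ∀ m, 1 ≤ m → m ≤ M → (Q m)ᵀ = Q m := by
    intro m h1 h2
    simp only [hQdef, Matrix.transpose_sub, hsymm m h2, hsymm (m-1) (by omega)]
  have hbnn : ∀ m, 1 ≤ m → m ≤ M → 0 ≤ b m := by
    intro m h1 h2
    rw [hb]
    exact hpsd (Q m) (hQsymm m h1 h2) (by simpa using hQmul m m h1 h2 h1 h2)
  set c : ℝ := μ ⬝ᵥ ((1 - P M) *ᵥ μ) with hcdef
  have hPMP : P M * P M = P M := by simpa using hmin M M le_rfl le_rfl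
  have hcnn : 0 ≤ c := by
    apply hpsd
    · rw [Matrix.transpose_sub, Matrix.transpose_one, hsymm M le_rfl]
    · have h2 : (1 - P M) * (1 - P M) = 1 - P M - P M + P M * P M := by noncomm_ring
      rw [h2, hPMP]; abel
  have hbv : ∀ m, 1 ≤ m → m ≤ M → 0 < b m + v m := by
    intro m h1 h2
    have := hv m (by rw [hI, Finset.mem_Icc]; omega)
    have := hbnn m h1 h2; linarith
  have hgs0 : ∀ m, 1 ≤ m → m ≤ M → 0 ≤ gs m := fun m h1 h2 => by
    rw [hgs]; exact div_nonneg (hbnn m h1 h2) (hbv m h1 h2).le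
  have hgs1 : ∀ m, 1 ≤ m → m ≤ M → gs m < 1 := fun m h1 h2 => by
    rw [hgs, div_lt_one (hbv m h1 h2)]
    have := hv m (by rw [hI, Finset.mem_Icc]; omega); linarith
  -- cumulative weights
  set G : (ℕ → ℝ) → ℕ → ℝ := fun w m => ∑ j ∈ Finset.Icc m M, w j with hGdef
  -- linear-algebra helpers
  have hsum_mulVec : ∀ (s : Finset ℕ) (f : ℕ → Matrix (Fin n) (Fin n) ℝ),
      (∑ i ∈ s, f i) *ᵥ μ = ∑ i ∈ s, f i *ᵥ μ := by
    intro s f; ext j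
    simp only [Matrix.mulVec, dotProduct, Finset.sum_apply, Matrix.sum_apply,
      Finset.sum_mul]
    exact Finset.sum_comm
  have hdotsum : ∀ (s : Finset ℕ) (f : ℕ → Fin n → ℝ),
      μ ⬝ᵥ (∑ i ∈ s, f i) = ∑ i ∈ s, μ ⬝ᵥ f i := by
    intro s f
    simp only [dotProduct, Finset.sum_apply, Finset.mul_sum]
    exact Finset.sum_comm
  have hdot : ∀ co : ℕ → ℝ,
      μ ⬝ᵥ ((∑ m ∈ I, co m • Q m) *ᵥ μ) = ∑ m ∈ I, co m * b m := by
    intro co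
    rw [hsum_mulVec, hdotsum]
    refine Finset.sum_congr rfl fun m hm => ?_
    rw [Matrix.smul_mulVec, dotProduct_smul, smul_eq_mul]
    congr 1
    simp only [hQdef]
    exact (hb m).symm
  have hPMb : μ ⬝ᵥ (P M *ᵥ μ) = ∑ m ∈ I, b m := by
    have h1 : P M = ∑ m ∈ I, (1:ℝ) • Q m := by
      simp only [one_smul]; rw [hI, hQP M]
    rw [h1, hdot]; simp
  have hμμ : μ ⬝ᵥ μ = c + ∑ m ∈ I, b m := by
    rw [hcdef, Matrix.sub_mulVec, dotProduct_sub, Matrix.one_mulVec, hPMb]; ring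
  -- the fundamental decomposition of the averaging risk
  have key : ∀ w : ℕ → ℝ,
      Rw w = c + ∑ m ∈ I, ((1 - G w m)^2 * b m + (G w m)^2 * v m) := by
    intro w
    have hA : ∑ m ∈ I, w m • P m = ∑ m ∈ I, G w m • Q m := by
      have h1 : ∑ m ∈ I, G w m • Q m = ∑ m ∈ I, ∑ j ∈ Finset.Icc m M, w j • Q m := by
        refine Finset.sum_congr rfl fun m hm => ?_
        simp only [hGdef]
        rw [Finset.sum_smul]
      have h2 : (∑ m ∈ I, ∑ j ∈ Finset.Icc m M, w j • Q m)
          = ∑ j ∈ I, ∑ m ∈ Finset.Icc 1 j, w j • Q m := by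
        refine Finset.sum_comm' ?_
        intro x y
        rw [hI]
        simp only [Finset.mem_Icc]
        omega
      have h3 : (∑ j ∈ I, ∑ m ∈ Finset.Icc 1 j, w j • Q m) = ∑ j ∈ I, w j • P j := by
        refine Finset.sum_congr rfl fun j hj => ?_
        rw [← Finset.smul_sum, hQP j]
      rw [h1, h2, h3]
    have hAA : (∑ m ∈ I, G w m • Q m) * (∑ m ∈ I, G w m • Q m)
        = ∑ m ∈ I, (G w m)^2 • Q m := by
      rw [Finset.sum_mul_sum]
      refine Finset.sum_congr rfl fun i hi => ?_
      have hi' : 1 ≤ i ∧ i ≤ M := by rw [hI, Finset.mem_Icc] at hi; exact hi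
      rw [Finset.sum_eq_single_of_mem i hi]
      · rw [smul_mul_smul_comm, hQmul i i hi'.1 hi'.2 hi'.1 hi'.2, if_pos rfl, ← sq]
      · intro j hj hne
        have hj' : 1 ≤ j ∧ j ≤ M := by rw [hI, Finset.mem_Icc] at hj; exact hj
        rw [smul_mul_smul_comm, hQmul i j hi'.1 hi'.2 hj'.1 hj'.2,
          if_neg (fun h => hne h.symm), smul_zero]
    have hTr : ((∑ m ∈ I, G w m • Q m) * (∑ m ∈ I, G w m • Q m) * Ωm).trace
        = ∑ m ∈ I, (G w m)^2 * v m := by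
      rw [hAA, Finset.sum_mul, Matrix.trace_sum]
      refine Finset.sum_congr rfl fun m hm => ?_
      rw [smul_mul_assoc, Matrix.trace_smul, smul_eq_mul]
      congr 1
      simp only [hQdef]
      exact (hvdef m).symm
    have hsq : ∀ A : Matrix (Fin n) (Fin n) ℝ, (A - 1) * (A - 1) = A * A - A - A + 1 := by
      intro A; noncomm_ring
    rw [hRw w, hA, hsq, hTr]
    rw [Matrix.add_mulVec, Matrix.sub_mulVec, Matrix.sub_mulVec, dotProduct_add,
      dotProduct_sub, dotProduct_sub, Matrix.one_mulVec, hAA, hμμ]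
    have hd1 : μ ⬝ᵥ ((∑ m ∈ I, (G w m)^2 • Q m) *ᵥ μ) = ∑ m ∈ I, (G w m)^2 * b m :=
      hdot (fun m => (G w m)^2)
    have hd2 : μ ⬝ᵥ ((∑ m ∈ I, G w m • Q m) *ᵥ μ) = ∑ m ∈ I, G w m * b m :=
      hdot (fun m => G w m)
    rw [hd1, hd2]
    have expand : ∑ m ∈ I, ((1 - G w m)^2 * b m + (G w m)^2 * v m)
        = ∑ m ∈ I, (G w m)^2 * b m - 2 * ∑ m ∈ I, G w m * b m
          + ∑ m ∈ I, b m + ∑ m ∈ I, (G w m)^2 * v m := by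
      rw [Finset.mul_sum, ← Finset.sum_sub_distrib, ← Finset.sum_add_distrib,
        ← Finset.sum_add_distrib]
      refine Finset.sum_congr rfl fun m _ => ?_
      ring
    rw [expand]; ring
  have hG1 : ∀ w : ℕ → ℝ, (∑ m ∈ I, w m) = 1 → G w 1 = 1 := by
    intro w hw
    simp only [hGdef]
    rw [← hI]; exact hw
  have hsplitI : ∀ f : ℕ → ℝ, ∑ m ∈ I, f m = f 1 + ∑ m ∈ Finset.Icc 2 M, f m := by
    intro f
    have h1I : (1:ℕ) ∈ I := by rw [hI, Finset.mem_Icc]; omega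
    rw [← Finset.add_sum_erase _ f h1I]
    congr 1
    rw [hI, Finset.Icc_erase_left, ← Finset.Icc_add_one_left_eq_Ioc]
    rfl
  -- the rounded grid weight
  set K : ℕ → ℕ := fun m => if m ≤ 1 then N else if m ≤ M then ⌊(N:ℝ) * gs m + 1/2⌋₊ else 0
    with hKdef
  have hK1 : K 1 = N := by simp [hKdef]
  have hKM1 : K (M+1) = 0 := by
    rw [hKdef]; dsimp only
    rw [if_neg (by omega), if_neg (by omega)]
  have hKfloor : ∀ m, 2 ≤ m → m ≤ M → K m = ⌊(N:ℝ) * gs m + 1/2⌋₊ := by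
    intro m h1 h2
    rw [hKdef]; dsimp only
    rw [if_neg (by omega), if_pos h2]
  have hKN' : ∀ m, K m ≤ N := by
    intro m
    rw [hKdef]; dsimp only
    split
    · exact le_rfl
    · split
      · rename_i hm1 hmM
        exact (round_bound N hN (gs m) (hgs0 m (by omega) hmM) (hgs1 m (by omega) hmM)).1
      · exact Nat.zero_le N
  have hKmono : ∀ m, 1 ≤ m → K (m+1) ≤ K m := by
    intro m hm
    rcases le_or_gt (m+1) M with h | h
    · rcases Nat.eq_or_lt_of_le hm with h1 | h1
      · rw [← h1, hK1]; exact hKN' 2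
      · have e1 : K (m+1) = ⌊(N:ℝ) * gs (m+1) + 1/2⌋₊ := hKfloor (m+1) (by omega) h
        have e2 : K m = ⌊(N:ℝ) * gs m + 1/2⌋₊ := hKfloor m (by omega) (by omega)
        rw [e1, e2]
        apply Nat.floor_mono
        have := hgsmono m (by rw [Finset.mem_Icc]; omega)
        nlinarith
    · have e1 : K (m+1) = 0 := by
        rw [hKdef]; dsimp only
        rw [if_neg (by omega), if_neg (by omega)]
      rw [e1]; exact Nat.zero_le _
  set w' : ℕ → ℝ := fun m => ((K m - K (m+1) : ℕ) : ℝ) / N with hw'def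
  have hw'cast : ∀ m, 1 ≤ m → w' m = (K m : ℝ)/N - (K (m+1) : ℝ)/N := by
    intro m hm
    rw [hw'def]; dsimp only
    rw [Nat.cast_sub (hKmono m hm), sub_div]
  have hw'grid : ∀ m ∈ I, ∃ k : ℕ, k ≤ N ∧ w' m = (k:ℝ)/N := by
    intro m hm
    exact ⟨K m - K (m+1), le_trans (Nat.sub_le _ _) (hKN' m), rfl⟩
  have hGw' : ∀ m, 1 ≤ m → G w' m = (K m : ℝ)/N := by
    intro m h1
    simp only [hGdef]
    rcases le_or_gt m (M+1) with h2 | h2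
    · have hc : ∀ j ∈ Finset.Icc m M, w' j =
          (fun i => (K i:ℝ)/N) j - (fun i => (K i:ℝ)/N) (j+1) := by
        intro j hj
        rw [Finset.mem_Icc] at hj
        exact hw'cast j (by omega)
      rw [Finset.sum_congr rfl hc, sum_Icc_sub_succ (fun i => (K i:ℝ)/N) m M h2, hKM1]
      simp
    · rw [Finset.Icc_eq_empty (by omega), Finset.sum_empty]
      have : K m = 0 := by
        rw [hKdef]; dsimp only
        rw [if_neg (by omega), if_neg (by omega)]
      rw [this]; simp
  have hw'sum : ∑ m ∈ I, w' m = 1 := by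
    have h1 : G w' 1 = (K 1:ℝ)/N := hGw' 1 le_rfl
    simp only [hGdef] at h1
    rw [← hI] at h1
    rw [h1, hK1, div_self (ne_of_gt hNR)]
  -- per-term bound on the grid risk
  obtain ⟨hms1, hmsM⟩ := Finset.mem_Icc.mp (hI ▸ hmStar)
  have hterm : ∀ m ∈ Finset.Icc 2 M,
      (1 - G w' m)^2 * b m + (G w' m)^2 * v m
        ≤ gs m * v m + 1/(2*(N:ℝ)) * (if m ≤ mStar then v m else b m) := by
    intro m hm
    obtain ⟨h2m, hmM⟩ := Finset.mem_Icc.mp hm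
    have hm1 : 1 ≤ m := by omega
    have hVm := hv m (by rw [hI, Finset.mem_Icc]; omega)
    have hBm := hbnn m hm1 hmM
    have hxm : gs m * (b m + v m) = b m := by
      rw [hgs]
      field_simp
    have hpt := per_term N hN (b m) (v m) (gs m) hBm hVm hxm
      (hgs0 m hm1 hmM) (hgs1 m hm1 hmM)
    rw [hGw' m hm1, hKfloor m h2m hmM]
    split_ifs with ht
    · exact hpt.1
    · exact hpt.2
  -- lower bound on optimal simplex risk
  have hGS1 : G wS 1 = 1 := hG1 wS hwSW.2
  have hlow : c + v 1 + ∑ m ∈ Finset.Icc 2 M, gs m * v m ≤ Rw wS := by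
    rw [key wS, hsplitI (fun m => (1 - G wS m)^2 * b m + (G wS m)^2 * v m)]
    have h1 : (1 - G wS 1)^2 * b 1 + (G wS 1)^2 * v 1 = v 1 := by
      rw [hGS1]; ring
    rw [h1]
    have h2 : ∑ m ∈ Finset.Icc 2 M, gs m * v m
        ≤ ∑ m ∈ Finset.Icc 2 M, ((1 - G wS m)^2 * b m + (G wS m)^2 * v m) := by
      refine Finset.sum_le_sum fun m hm => ?_
      obtain ⟨h2m, hmM⟩ := Finset.mem_Icc.mp hm
      rw [hgs]
      exact quad_lower (b m) (v m) (G wS m) (hbnn m (by omega) hmM)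
        (hv m (by rw [hI, Finset.mem_Icc]; omega))
    linarith
  -- upper bound on optimal grid risk
  have hup : Rw wN ≤ c + v 1 + ∑ m ∈ Finset.Icc 2 M,
      (gs m * v m + 1/(2*(N:ℝ)) * (if m ≤ mStar then v m else b m)) := by
    refine le_trans (hwNOpt w' hw'grid hw'sum) ?_
    rw [key w', hsplitI (fun m => (1 - G w' m)^2 * b m + (G w' m)^2 * v m)]
    have h1 : (1 - G w' 1)^2 * b 1 + (G w' 1)^2 * v 1 = v 1 := by
      rw [hGw' 1 le_rfl, hK1, div_self (ne_of_gt hNR)]; ring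
    rw [h1]
    have h2 := Finset.sum_le_sum hterm
    linarith
  -- identify Rm mStar
  have hPms : μ ⬝ᵥ (P mStar *ᵥ μ) = ∑ m ∈ Finset.Icc 1 mStar, b m := by
    rw [← hQP mStar, hsum_mulVec, hdotsum]
    refine Finset.sum_congr rfl fun m hm => ?_
    simp only [hQdef]
    exact (hb m).symm
  have htrace : (P mStar * Ωm).trace = ∑ m ∈ Finset.Icc 1 mStar, v m := by
    rw [← hQP mStar, Finset.sum_mul, Matrix.trace_sum]
    refine Finset.sum_congr rfl fun m hm => ?_
    simp only [hQdef]
    exact (hvdef m).symm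
  have e0 : Finset.Icc 1 mStar = Finset.Ioc 0 mStar := by
    ext z; simp only [Finset.mem_Icc, Finset.mem_Ioc]; omega
  have e1 : Finset.Icc (mStar+1) M = Finset.Ioc mStar M := by
    ext z; simp only [Finset.mem_Icc, Finset.mem_Ioc]; omega
  have e2 : Finset.Icc 1 M = Finset.Ioc 0 M := by
    ext z; simp only [Finset.mem_Icc, Finset.mem_Ioc]; omega
  have e3 : Finset.Icc 2 M = Finset.Ioc 1 M := by
    ext z; simp only [Finset.mem_Icc, Finset.mem_Ioc]; omega
  have hsplitb : ∑ m ∈ I, b m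
      = ∑ m ∈ Finset.Icc 1 mStar, b m + ∑ m ∈ Finset.Icc (mStar+1) M, b m := by
    rw [hI, e0, e1, e2, Finset.sum_Ioc_consecutive _ (by omega : 0 ≤ mStar) hmsM]
  have hq : μ ⬝ᵥ ((1 - P mStar) *ᵥ μ) = c + ∑ m ∈ Finset.Icc (mStar+1) M, b m := by
    rw [Matrix.sub_mulVec, dotProduct_sub, Matrix.one_mulVec, hμμ, hPms, hsplitb]
    ring
  have hvsplit : ∑ m ∈ Finset.Icc 1 mStar, v m = v 1 + ∑ m ∈ Finset.Ioc 1 mStar, v m := by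
    rw [e0, ← Finset.sum_Ioc_consecutive _ (by omega : 0 ≤ 1) hms1]
    congr 1
    rw [Nat.Ioc_succ_singleton, Finset.sum_singleton]
  have htsum : ∑ m ∈ Finset.Icc 2 M, (if m ≤ mStar then v m else b m)
      = ∑ m ∈ Finset.Ioc 1 mStar, v m + ∑ m ∈ Finset.Icc (mStar+1) M, b m := by
    rw [e3, ← Finset.sum_Ioc_consecutive _ hms1 hmsM, e1]
    congr 1
    · refine Finset.sum_congr rfl fun m hm => ?_
      rw [Finset.mem_Ioc] at hm
      rw [if_pos hm.2]
    · refine Finset.sum_congr rfl fun m hm => ?_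
      rw [Finset.mem_Ioc] at hm
      rw [if_neg (by omega)]
  have hv1 := hv 1 (by rw [hI, Finset.mem_Icc]; omega)
  have hRmlow : ∑ m ∈ Finset.Icc 2 M, (if m ≤ mStar then v m else b m) ≤ Rm mStar := by
    rw [hRm, hq, htrace, hvsplit, htsum]
    linarith
  -- final assembly
  have hfin : Rw wN - Rw wS
      ≤ ∑ m ∈ Finset.Icc 2 M, 1/(2*(N:ℝ)) * (if m ≤ mStar then v m else b m) := by
    have := Finset.sum_add_distrib (s := Finset.Icc 2 M)
      (f := fun m => gs m * v m)
      (g := fun m => 1/(2*(N:ℝ)) * (if m ≤ mStar then v m else b m))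
    linarith [hup, hlow]
  rw [← Finset.mul_sum] at hfin
  refine le_trans hfin ?_
  exact mul_le_mul_of_nonneg_left hRmlow (by positivity)
end
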